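/- arXiv:2206.02227 — 8 statements merged into one kernel-verified Lean document; each statement's English description precedes it below -/
import Mathlib

section
/- For the PoS protocol with constant reward R > 0, each investor's share process (π_{k,t}, t ≥ 0) defined by π_{k,t} = (N_{t-1}/N_t)π_{k,t-1} + (R_t/N_t)1_{S_{k,t}}, where N_t = N_{t-1} + R_t and P(S_{k,t} | F_{t-1}) = π_{k,t-1}, is a martingale with respect to the natural filtration. -/
open MeasureTheory Filter Set

/-- For the PoS protocol with constant reward `R > 0`, each investor's share process
`π_{k,t}` defined by `π_{k,t} = (N_{t-1}/N_t) π_{k,t-1} + (R/N_t) 1_{S_{k,t}}`, where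
`N_t = N_{t-1} + R` and `P(S_{k,t} | 𝓕_{t-1}) = π_{k,t-1}`, is a martingale. -/
theorem pos_share_martingale
    {Ω : Type*} {m0 : MeasurableSpace Ω} (μ : Measure Ω) [IsProbabilityMeasure μ]
    (𝓕 : Filtration ℕ m0)
    (π : ℕ → Ω → ℝ) (S : ℕ → Set Ω) (R : ℝ) (Nt : ℕ → ℝ)
    (hR : 0 < R) (hN0 : 0 < Nt 0)
    (hNt : ∀ t, Nt (t + 1) = Nt t + R)
    (hadapted : Adapted 𝓕 π)
    (hint : ∀ t, Integrable (π t) μ)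
    (hSmeas : ∀ t, MeasurableSet[𝓕 (t + 1)] (S (t + 1)))
    (hcond : ∀ t, μ[(S (t + 1)).indicator (fun _ => (1 : ℝ)) | 𝓕 t] =ᵐ[μ] π t)
    (hrec : ∀ t, π (t + 1) = fun ω =>
      (Nt t / Nt (t + 1)) * π t ω + (R / Nt (t + 1)) * (S (t + 1)).indicator 1 ω) :
    Martingale π 𝓕 μ := by
  have hNpos : ∀ t, 0 < Nt t := by
    intro t
    induction t with
    | zero => exact hN0
    | succ n ih => rw [hNt]; positivity
  refine martingale_nat hadapted.stronglyAdapted hint ?_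
  intro t
  set c1 := Nt t / Nt (t + 1)
  set c2 := R / Nt (t + 1)
  have hind : Integrable ((S (t + 1)).indicator (fun _ => (1 : ℝ))) μ :=
    (integrable_const 1).indicator (𝓕.le _ _ (hSmeas t))
  have h1 : Integrable (fun ω => c1 * π t ω) μ := (hint t).const_mul c1
  have h2 : Integrable (fun ω => c2 * (S (t + 1)).indicator (fun _ => (1 : ℝ)) ω) μ :=
    hind.const_mul c2
  rw [hrec t]
  symm
  have hsum : c1 + c2 = 1 := by
    rw [← add_div, ← hNt t, div_self (hNpos (t + 1)).ne']
  calc μ[fun ω => c1 * π t ω + c2 * (S (t + 1)).indicator 1 ω | 𝓕 t]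
      =ᵐ[μ] μ[fun ω => c1 * π t ω | 𝓕 t]
        + μ[fun ω => c2 * (S (t + 1)).indicator (fun _ => (1 : ℝ)) ω | 𝓕 t] :=
        condExp_add h1 h2 (𝓕 t)
    _ =ᵐ[μ] c1 • μ[π t | 𝓕 t] + c2 • μ[(S (t + 1)).indicator (fun _ => (1 : ℝ)) | 𝓕 t] := by
        exact ((condExp_smul c1 (π t) (𝓕 t)).add (condExp_smul c2 _ (𝓕 t)))
    _ =ᵐ[μ] fun ω => c1 * π t ω + c2 * π t ω := by
        filter_upwards [hcond t] with ω hω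
        rw [condExp_of_stronglyMeasurable (𝓕.le t) (hadapted.stronglyAdapted t) (hint t)]
        simp [hω, smul_eq_mul]
    _ =ᵐ[μ] π t := by
        filter_upwards with ω
        rw [← add_mul, hsum, one_mul]
end

section
/- For the time-dependent Pólya urn with rewards R_t, an individual investor's share satisfies Var(π_{k,t}) = a_t · π_{k,0}(1 - π_{k,0}), where a_1 = (R_1/N_1)² and a_{t+1} = a_t + (R_{t+1}/N_{t+1})²(1 - a_t). -/
open MeasureTheory Filter Set ProbabilityTheory

/-- For the time-dependent Pólya urn with rewards `R_t`, an individual investor's share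
satisfies `Var(π_{k,t}) = a_t · π_{k,0} (1 - π_{k,0})`, where `a_1 = (R_1/N_1)²` and
`a_{t+1} = a_t + (R_{t+1}/N_{t+1})² (1 - a_t)`. -/
theorem pos_share_variance
    {Ω : Type*} {m0 : MeasurableSpace Ω} (μ : Measure Ω) [IsProbabilityMeasure μ]
    (𝓕 : Filtration ℕ m0)
    (π : ℕ → Ω → ℝ) (S : ℕ → Set Ω) (R : ℕ → ℝ) (Nt : ℕ → ℝ) (a : ℕ → ℝ) (p : ℝ)
    (hR : ∀ t, 0 < R t) (hN0 : 0 < Nt 0)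
    (hNt : ∀ t, Nt (t + 1) = Nt t + R (t + 1))
    (hadapted : Adapted 𝓕 π)
    (hmem : ∀ t ω, π t ω ∈ Set.Icc (0 : ℝ) 1)
    (hSmeas : ∀ t, MeasurableSet[𝓕 (t + 1)] (S (t + 1)))
    (hcond : ∀ t, μ[(S (t + 1)).indicator (fun _ => (1 : ℝ)) | 𝓕 t] =ᵐ[μ] π t)
    (hrec : ∀ t, π (t + 1) = fun ω =>
      (Nt t / Nt (t + 1)) * π t ω + (R (t + 1) / Nt (t + 1)) * (S (t + 1)).indicator 1 ω)
    (hπ0 : π 0 = fun _ => p)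
    (ha1 : a 1 = (R 1 / Nt 1) ^ 2)
    (harec : ∀ t ≥ 1, a (t + 1) = a t + (R (t + 1) / Nt (t + 1)) ^ 2 * (1 - a t)) :
    ∀ t ≥ 1, variance (π t) μ = a t * (p * (1 - p)) := by
  set I : ℕ → Ω → ℝ := fun t => (S (t + 1)).indicator (fun _ => (1 : ℝ)) with hI
  set c : ℕ → ℝ := fun t => Nt t / Nt (t + 1) with hc
  set d : ℕ → ℝ := fun t => R (t + 1) / Nt (t + 1) with hd
  -- positivity of Nt
  have hNpos : ∀ t, 0 < Nt t := by
    intro t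
    induction t with
    | zero => exact hN0
    | succ n ih => rw [hNt]; have := hR (n + 1); linarith
  have hsum : ∀ t, c t + d t = 1 := by
    intro t
    simp only [hc, hd]
    rw [← add_div, ← hNt t, div_self (hNpos (t + 1)).ne']
  -- measurability and boundedness
  have hmeas : ∀ t, AEStronglyMeasurable (π t) μ :=
    fun t => ((hadapted t).mono (𝓕.le t) le_rfl).aestronglyMeasurable
  have hbound : ∀ t ω, |π t ω| ≤ 1 := fun t ω =>
    abs_le.2 ⟨by linarith [(hmem t ω).1], (hmem t ω).2⟩
  have hImeas : ∀ t, AEStronglyMeasurable (I t) μ := fun t =>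
    (stronglyMeasurable_const.indicator (𝓕.le (t + 1) _ (hSmeas t))).aestronglyMeasurable
  have hIb : ∀ t ω, |I t ω| ≤ 1 := by
    intro t ω
    by_cases h : ω ∈ S (t + 1) <;> simp [hI, Set.indicator_apply, h]
  have hπtop : ∀ t, MemLp (π t) ⊤ μ := fun t =>
    memLp_top_of_bound (hmeas t) 1 (Filter.Eventually.of_forall (hbound t))
  have hπint : ∀ t, Integrable (π t) μ := fun t => (hπtop t).integrable le_top
  have hIint : ∀ t, Integrable (I t) μ := fun t =>
    (memLp_top_of_bound (hImeas t) 1 (Filter.Eventually.of_forall (hIb t))).integrable le_top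
  have hprodint : ∀ t, Integrable (fun ω => π t ω * I t ω) μ := by
    intro t
    refine (memLp_top_of_bound ((hmeas t).mul (hImeas t)) 1
      (Filter.Eventually.of_forall fun ω => ?_)).integrable le_top
    calc |π t ω * I t ω| = |π t ω| * |I t ω| := abs_mul _ _
      _ ≤ 1 * 1 := mul_le_mul (hbound t ω) (hIb t ω) (abs_nonneg _) zero_le_one
      _ = 1 := one_mul 1
  have hsqint : ∀ t, Integrable (fun ω => π t ω * π t ω) μ := by
    intro t
    refine (memLp_top_of_bound ((hmeas t).mul (hmeas t)) 1
      (Filter.Eventually.of_forall fun ω => ?_)).integrable le_top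
    calc |π t ω * π t ω| = |π t ω| * |π t ω| := abs_mul _ _
      _ ≤ 1 * 1 := mul_le_mul (hbound t ω) (hbound t ω) (abs_nonneg _) zero_le_one
      _ = 1 := one_mul 1
  -- a pointwise form of the recursion
  have hrec' : ∀ t ω, π (t + 1) ω = c t * π t ω + d t * I t ω := by
    intro t ω
    rw [hrec t]
    rfl
  -- E[I t] = E[π t]
  have hEI : ∀ t, ∫ ω, I t ω ∂μ = ∫ ω, π t ω ∂μ := by
    intro t
    rw [← integral_condExp (𝓕.le t)]
    exact integral_congr_ae (hcond t)
  -- E[π t] = p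
  have hEπ : ∀ t, ∫ ω, π t ω ∂μ = p := by
    intro t
    induction t with
    | zero => rw [hπ0]; simp
    | succ n ih =>
      have h1 : ∫ ω, π (n + 1) ω ∂μ = c n * (∫ ω, π n ω ∂μ) + d n * (∫ ω, I n ω ∂μ) := by
        simp_rw [hrec']
        rw [integral_add ((hπint n).const_mul _) ((hIint n).const_mul _),
          integral_const_mul, integral_const_mul]
      rw [h1, hEI n, ih]
      linear_combination p * hsum n
  -- E[π t * I t] = E[π t ^ 2]
  have hcross : ∀ t, ∫ ω, π t ω * I t ω ∂μ = ∫ ω, π t ω * π t ω ∂μ := by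
    intro t
    have h1 : μ[π t * I t | 𝓕 t] =ᵐ[μ] π t * μ[I t | 𝓕 t] :=
      condExp_mul_of_stronglyMeasurable_left (hadapted t).stronglyMeasurable (hprodint t) (hIint t)
    have h2 : π t * μ[I t | 𝓕 t] =ᵐ[μ] fun ω => π t ω * π t ω :=
      (hcond t).mono fun ω hω => by simp [hω]; exact Or.inl hω
    have h3 : ∫ ω, (π t * I t) ω ∂μ = ∫ ω, π t ω * π t ω ∂μ := by
      rw [← integral_condExp (𝓕.le t)]
      exact integral_congr_ae (h1.trans h2)
    exact h3
  -- second moment recursion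
  have hm2 : ∀ t, ∫ ω, π (t + 1) ω * π (t + 1) ω ∂μ =
      (1 - d t ^ 2) * (∫ ω, π t ω * π t ω ∂μ) + d t ^ 2 * p := by
    intro t
    have hpt : ∀ ω, π (t + 1) ω * π (t + 1) ω =
        c t ^ 2 * (π t ω * π t ω) + (2 * c t * d t) * (π t ω * I t ω) + d t ^ 2 * I t ω := by
      intro ω
      rw [hrec' t ω]
      by_cases h : ω ∈ S (t + 1) <;> simp [hI, Set.indicator_apply, h] <;> ring
    have hint1 : Integrable (fun ω => c t ^ 2 * (π t ω * π t ω)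
        + (2 * c t * d t) * (π t ω * I t ω)) μ :=
      ((hsqint t).const_mul _).add ((hprodint t).const_mul _)
    calc ∫ ω, π (t + 1) ω * π (t + 1) ω ∂μ
        = ∫ ω, (c t ^ 2 * (π t ω * π t ω) + (2 * c t * d t) * (π t ω * I t ω)
            + d t ^ 2 * I t ω) ∂μ := by simp_rw [hpt]
      _ = c t ^ 2 * (∫ ω, π t ω * π t ω ∂μ) + (2 * c t * d t) * (∫ ω, π t ω * I t ω ∂μ)
            + d t ^ 2 * (∫ ω, I t ω ∂μ) := by
          rw [integral_add hint1 ((hIint t).const_mul _),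
            integral_add ((hsqint t).const_mul _) ((hprodint t).const_mul _),
            integral_const_mul, integral_const_mul, integral_const_mul]
      _ = (1 - d t ^ 2) * (∫ ω, π t ω * π t ω ∂μ) + d t ^ 2 * p := by
          rw [hcross t, hEI t, hEπ t]
          have hcd : c t = 1 - d t := by linarith [hsum t]
          rw [hcd]; ring
  -- key: second moment formula
  have key : ∀ t, 1 ≤ t → ∫ ω, π t ω * π t ω ∂μ = a t * (p * (1 - p)) + p ^ 2 := by
    intro t ht
    induction t, ht using Nat.le_induction with
    | base =>
      have h0 : ∫ ω, π 0 ω * π 0 ω ∂μ = p ^ 2 := by rw [hπ0]; simp [sq]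
      rw [hm2 0, h0, ha1]
      simp only [hd]
      ring
    | succ n hn ih =>
      rw [hm2 n, ih, harec n hn]
      ring
  -- conclude
  intro t ht
  have hL2 : MemLp (π t) 2 μ := (hπtop t).mono_exponent le_top
  rw [variance_eq_sub hL2]
  have hsq : μ[π t ^ 2] = ∫ ω, π t ω * π t ω ∂μ := by
    apply integral_congr_ae
    filter_upwards with ω
    simp [sq]
  rw [hsq, key t ht, hEπ t]
  ring
end

section
/- For the Pólya urn with constant reward R > 0, if the initial endowment n_{k,0} = f(N) satisfies f(N) → ∞ as N → ∞, then for each ε > 0 and each time t ≥ 1 (or t = ∞), P(|π_{k,t}/π_{k,0} − 1| > ε) ≤ 5R/(4ε² f(N)), which tends to 0 as N → ∞. -/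
open MeasureTheory Filter Set ProbabilityTheory


lemma integral_mul_sub_consts {Ω : Type*} {m0 : MeasurableSpace Ω} (μ : Measure Ω)
    [IsProbabilityMeasure μ] (p q : Ω → ℝ)
    (hpq : Integrable (fun ω => p ω * q ω) μ) (hp : Integrable p μ) (hq : Integrable q μ)
    (c d : ℝ) :
    ∫ ω, (p ω - c) * (q ω - d) ∂μ
      = ∫ ω, p ω * q ω ∂μ - c * ∫ ω, q ω ∂μ - d * ∫ ω, p ω ∂μ + c * d := by
  have h : (fun ω => (p ω - c) * (q ω - d))
      = fun ω => (p ω * q ω - c * q ω) - (d * p ω - c * d) := by funext ω; ring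
  have i1 : Integrable (fun ω => p ω * q ω - c * q ω) μ := hpq.sub (hq.const_mul c)
  have i2 : Integrable (fun ω => d * p ω - c * d) μ := (hp.const_mul d).sub (integrable_const (c*d))
  rw [h, integral_sub i1 i2, integral_sub hpq (hq.const_mul c),
    integral_sub (hp.const_mul d) (integrable_const (c*d)),
    MeasureTheory.integral_const_mul, MeasureTheory.integral_const_mul, integral_const]
  simp; ring

lemma cheb_bound {Ω : Type*} {m0 : MeasurableSpace Ω} (μ : Measure Ω) [IsProbabilityMeasure μ]
    (g : Ω → ℝ) (c ε B : ℝ) (hc : 0 < c) (hε : 0 < ε)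
    (hint : Integrable (fun ω => (g ω - c) ^ 2) μ)
    (hB : ∫ ω, (g ω - c) ^ 2 ∂μ ≤ B) :
    (μ {ω | ε < |g ω / c - 1|}).toReal ≤ B / (ε ^ 2 * c ^ 2) := by
  have hsub : {ω | ε < |g ω / c - 1|} ⊆ {ω | (ε * c) ^ 2 ≤ (g ω - c) ^ 2} := by
    intro ω hω
    simp only [Set.mem_setOf_eq] at hω ⊢
    have h1 : |g ω / c - 1| = |g ω - c| / c := by
      rw [show g ω / c - 1 = (g ω - c) / c by field_simp, abs_div, abs_of_pos hc]
    have h2 : ε * c < |g ω - c| := by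
      rw [h1, lt_div_iff₀ hc] at hω; linarith
    calc (ε * c) ^ 2 ≤ |g ω - c| ^ 2 := by
          apply pow_le_pow_left₀ (by positivity) h2.le
      _ = (g ω - c) ^ 2 := sq_abs _
  have hmarkov := mul_meas_ge_le_integral_of_nonneg
    (ae_of_all μ fun ω => sq_nonneg (g ω - c)) hint ((ε * c) ^ 2)
  have hmono : (μ {ω | ε < |g ω / c - 1|}).toReal
      ≤ (μ {ω | (ε * c) ^ 2 ≤ (g ω - c) ^ 2}).toReal :=
    ENNReal.toReal_mono (measure_ne_top μ _) (measure_mono hsub)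
  have hkey := hmarkov.trans hB
  calc (μ {ω | ε < |g ω / c - 1|}).toReal
      ≤ (μ {ω | (ε * c) ^ 2 ≤ (g ω - c) ^ 2}).toReal := hmono
    _ ≤ B / (ε ^ 2 * c ^ 2) := by
        rw [le_div_iff₀ (by positivity)]
        calc (μ {ω | (ε * c) ^ 2 ≤ (g ω - c) ^ 2}).toReal * (ε ^ 2 * c ^ 2)
            = (ε * c) ^ 2 * (μ {ω | (ε * c) ^ 2 ≤ (g ω - c) ^ 2}).toReal := by ring
          _ ≤ B := hkey


lemma polya_mean_var
    {Ω : Type*} {m0 : MeasurableSpace Ω} (μ : Measure Ω) [IsProbabilityMeasure μ]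
    (𝓕 : Filtration ℕ m0) (π : ℕ → Ω → ℝ) (S : ℕ → Set Ω)
    (R : ℝ) (c : ℝ) (Nt : ℕ → ℝ)
    (hR : 0 < R) (hc0 : 0 < c) (hc1 : c ≤ 1) (hN : 0 < Nt 0)
    (hNt : ∀ t, Nt (t + 1) = Nt t + R)
    (hadapted : Adapted 𝓕 π)
    (hmem : ∀ t ω, π t ω ∈ Set.Icc (0:ℝ) 1)
    (hSmeas : ∀ t, MeasurableSet[𝓕 (t+1)] (S (t+1)))
    (hcond : ∀ t, μ[(S (t+1)).indicator (fun _ => (1:ℝ)) | 𝓕 t] =ᵐ[μ] π t)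
    (hrec : ∀ t, π (t+1) = fun ω =>
      (Nt t / Nt (t+1)) * π t ω + (R / Nt (t+1)) * (S (t+1)).indicator 1 ω)
    (hπ0 : π 0 = fun _ => c) :
    ∀ t, (∫ ω, π t ω ∂μ = c) ∧
      ∫ ω, (π t ω - c) ^ 2 ∂μ ≤ c * R * (1 / Nt 0 - 1 / Nt t) := by
  -- positivity of Nt
  have hNpos : ∀ t, 0 < Nt t := by
    intro t; induction t with
    | zero => exact hN
    | succ t ih => rw [hNt t]; linarith
  -- basic measurability and integrability
  have hπm : ∀ t, StronglyMeasurable (π t) := fun t => ((hadapted t).mono (𝓕.le t) le_rfl).stronglyMeasurable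
  have hbdd : ∀ (g : Ω → ℝ) (C : ℝ), AEStronglyMeasurable g μ → (∀ ω, ‖g ω‖ ≤ C) →
      Integrable g μ := fun g C hg hb =>
    ⟨hg, HasFiniteIntegral.of_bounded (C := C) (Eventually.of_forall hb)⟩
  have hπnorm : ∀ t ω, ‖π t ω‖ ≤ 1 := by
    intro t ω; rw [Real.norm_eq_abs, abs_le]
    exact ⟨by linarith [(hmem t ω).1], (hmem t ω).2⟩
  have hπint : ∀ t, Integrable (π t) μ := fun t =>
    hbdd _ 1 (hπm t).aestronglyMeasurable (hπnorm t)
  -- the indicator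
  set I : ℕ → Ω → ℝ := fun t => (S (t+1)).indicator (fun _ => (1:ℝ)) with hI
  have hIm : ∀ t, StronglyMeasurable (I t) := fun t =>
    (stronglyMeasurable_const.indicator (hSmeas t)).mono (𝓕.le (t+1))
  have hI01 : ∀ t ω, I t ω ∈ Set.Icc (0:ℝ) 1 := by
    intro t ω; by_cases h : ω ∈ S (t+1) <;>
      simp [hI, Set.indicator_of_mem, Set.indicator_of_notMem, h]
  have hInorm : ∀ t ω, ‖I t ω‖ ≤ 1 := by
    intro t ω; rw [Real.norm_eq_abs, abs_le]
    exact ⟨by linarith [(hI01 t ω).1], (hI01 t ω).2⟩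
  have hIint : ∀ t, Integrable (I t) μ := fun t =>
    hbdd _ 1 (hIm t).aestronglyMeasurable (hInorm t)
  have hIsq : ∀ t ω, I t ω * I t ω = I t ω := by
    intro t ω; by_cases h : ω ∈ S (t+1) <;>
      simp [hI, Set.indicator_of_mem, Set.indicator_of_notMem, h]
  -- products integrable
  have hpqint : ∀ t, Integrable (fun ω => π t ω * I t ω) μ := fun t =>
    hbdd _ 1 ((hπm t).mul (hIm t)).aestronglyMeasurable
      (fun ω => by
        rw [norm_mul]
        calc ‖π t ω‖ * ‖I t ω‖ ≤ 1 * 1 :=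
          mul_le_mul (hπnorm t ω) (hInorm t ω) (norm_nonneg _) zero_le_one
        _ = 1 := by ring)
  have hppint : ∀ t, Integrable (fun ω => π t ω * π t ω) μ := fun t =>
    hbdd _ 1 ((hπm t).mul (hπm t)).aestronglyMeasurable
      (fun ω => by
        rw [norm_mul]
        calc ‖π t ω‖ * ‖π t ω‖ ≤ 1 * 1 :=
          mul_le_mul (hπnorm t ω) (hπnorm t ω) (norm_nonneg _) zero_le_one
        _ = 1 := by ring)
  have hIIint : ∀ t, Integrable (fun ω => I t ω * I t ω) μ := fun t => by
    have : (fun ω => I t ω * I t ω) = I t := funext (hIsq t)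
    rw [this]; exact hIint t
  -- key conditional expectation facts
  have hIq : ∀ t, (∫ ω, π t ω ∂μ = c) → ∫ ω, I t ω ∂μ = c := by
    intro t hmean
    have h1 : ∫ ω, I t ω ∂μ = ∫ ω, (μ[I t | 𝓕 t]) ω ∂μ :=
      (integral_condExp (𝓕.le t)).symm
    rw [h1, integral_congr_ae (hcond t), hmean]
  have hpq : ∀ t, ∫ ω, π t ω * I t ω ∂μ = ∫ ω, π t ω * π t ω ∂μ := by
    intro t
    have h1 : μ[fun ω => π t ω * I t ω | 𝓕 t] =ᵐ[μ] fun ω => π t ω * (μ[I t | 𝓕 t]) ω :=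
      condExp_mul_of_stronglyMeasurable_left (hadapted t).stronglyMeasurable (hpqint t) (hIint t)
    have h2 : (fun ω => π t ω * (μ[I t | 𝓕 t]) ω) =ᵐ[μ] fun ω => π t ω * π t ω :=
      (hcond t).mono fun ω hω => by exact congrArg (fun x => π t ω * x) hω
    calc ∫ ω, π t ω * I t ω ∂μ = ∫ ω, (μ[fun ω => π t ω * I t ω | 𝓕 t]) ω ∂μ :=
          (integral_condExp (𝓕.le t)).symm
      _ = ∫ ω, π t ω * π t ω ∂μ := integral_congr_ae (h1.trans h2)
  -- the induction
  intro t; induction t with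
  | zero =>
    constructor
    · rw [hπ0]; simp
    · rw [hπ0]
      simp only [sub_self]
      norm_num
  | succ t ih =>
    obtain ⟨hmean, hvar⟩ := ih
    set a := Nt t / Nt (t+1) with ha
    set b := R / Nt (t+1) with hb
    have hN1 : 0 < Nt (t+1) := hNpos (t+1)
    have hN0' : 0 < Nt t := hNpos t
    have hab : a + b = 1 := by rw [ha, hb, hNt t]; field_simp
    have ha0 : 0 ≤ a := by positivity
    have hb0 : 0 ≤ b := by positivity
    have hIc : ∫ ω, I t ω ∂μ = c := hIq t hmean
    have hrecI : π (t+1) = fun ω => a * π t ω + b * I t ω := hrec t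
    -- mean
    have hmean' : ∫ ω, π (t+1) ω ∂μ = c := by
      rw [hrecI]
      rw [integral_add ((hπint t).const_mul a) ((hIint t).const_mul b),
        MeasureTheory.integral_const_mul, MeasureTheory.integral_const_mul, hmean, hIc]
      linear_combination c * hab
    refine ⟨hmean', ?_⟩
    -- variance pieces
    have hV : ∫ ω, (π t ω - c) ^ 2 ∂μ = ∫ ω, π t ω * π t ω ∂μ - c * c := by
      have h := integral_mul_sub_consts μ (π t) (π t) (hppint t) (hπint t) (hπint t) c c
      have h2 : (fun ω => (π t ω - c) ^ 2) = fun ω => (π t ω - c) * (π t ω - c) := by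
        funext ω; ring
      rw [h2, h, hmean]; ring
    have hC : ∫ ω, (π t ω - c) * (I t ω - c) ∂μ = ∫ ω, π t ω * π t ω ∂μ - c * c := by
      rw [integral_mul_sub_consts μ (π t) (I t) (hpqint t) (hπint t) (hIint t) c c,
        hpq t, hmean, hIc]; ring
    have hD : ∫ ω, (I t ω - c) * (I t ω - c) ∂μ = c - c * c := by
      rw [integral_mul_sub_consts μ (I t) (I t) (hIIint t) (hIint t) (hIint t) c c]
      have : (fun ω => I t ω * I t ω) = I t := funext (hIsq t)
      rw [this, hIc]; ring
    -- expansion of the new variance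
    have hexp : ∫ ω, (π (t+1) ω - c) ^ 2 ∂μ
        = a^2 * (∫ ω, (π t ω - c) ^ 2 ∂μ)
          + (2*a*b) * (∫ ω, (π t ω - c) * (I t ω - c) ∂μ)
          + b^2 * (∫ ω, (I t ω - c) * (I t ω - c) ∂μ) := by
      have hpt : (fun ω => (π (t+1) ω - c) ^ 2)
          = fun ω => a^2 * ((π t ω - c) ^ 2)
            + ((2*a*b) * ((π t ω - c) * (I t ω - c))
            + b^2 * ((I t ω - c) * (I t ω - c))) := by
        funext ω; rw [hrecI]
        linear_combination (((a * π t ω + b * I t ω - c)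
          + (a * (π t ω - c) + b * (I t ω - c))) * c) * hab
      have isq : ∀ (u v : Ω → ℝ), Integrable u μ → Integrable v μ →
          Integrable (fun ω => (u ω * v ω)) μ → ∀ (d e : ℝ),
          Integrable (fun ω => (u ω - d) * (v ω - e)) μ := by
        intro u v hu hv huv d e
        have : (fun ω => (u ω - d) * (v ω - e))
            = fun ω => (u ω * v ω - d * v ω) - (e * u ω - d * e) := by funext ω; ring
        rw [this]
        exact (huv.sub (hv.const_mul d)).sub ((hu.const_mul e).sub (integrable_const _))
      have ipp : Integrable (fun ω => (π t ω - c) * (π t ω - c)) μ :=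
        isq _ _ (hπint t) (hπint t) (hppint t) c c
      have ipq : Integrable (fun ω => (π t ω - c) * (I t ω - c)) μ :=
        isq _ _ (hπint t) (hIint t) (hpqint t) c c
      have iqq : Integrable (fun ω => (I t ω - c) * (I t ω - c)) μ :=
        isq _ _ (hIint t) (hIint t) (hIIint t) c c
      have ipp' : Integrable (fun ω => (π t ω - c) ^ 2) μ := by
        have : (fun ω => (π t ω - c) ^ 2) = fun ω => (π t ω - c) * (π t ω - c) := by
          funext ω; ring
        rw [this]; exact ipp
      have j0 : Integrable (fun ω => a^2 * ((π t ω - c) ^ 2)) μ := ipp'.const_mul _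
      have j2 : Integrable (fun ω => (2*a*b) * ((π t ω - c) * (I t ω - c))) μ :=
        ipq.const_mul _
      have j3 : Integrable (fun ω => b^2 * ((I t ω - c) * (I t ω - c))) μ :=
        iqq.const_mul _
      have j1 : Integrable (fun ω => (2*a*b) * ((π t ω - c) * (I t ω - c))
          + b^2 * ((I t ω - c) * (I t ω - c))) μ := j2.add j3
      rw [hpt, integral_add j0 j1, integral_add j2 j3,
        MeasureTheory.integral_const_mul, MeasureTheory.integral_const_mul,
        MeasureTheory.integral_const_mul]
      ring
    -- put it together
    have hVnn : 0 ≤ ∫ ω, (π t ω - c) ^ 2 ∂μ :=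
      integral_nonneg fun ω => sq_nonneg _
    have hstep : ∫ ω, (π (t+1) ω - c) ^ 2 ∂μ
        ≤ ∫ ω, (π t ω - c) ^ 2 ∂μ + b^2 * c := by
      rw [hexp, hC, hD, ← hV]
      have h1 : a^2 + 2*a*b ≤ 1 := by nlinarith
      nlinarith [sq_nonneg b, mul_nonneg (mul_nonneg hb0 hb0) (mul_nonneg hc0.le hc0.le)]
    have hb2 : b^2 * c ≤ c * R * (1 / Nt t - 1 / Nt (t+1)) := by
      have e : 1 / Nt t - 1 / Nt (t+1) = R / (Nt t * Nt (t+1)) := by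
        rw [hNt t]; field_simp; ring
      have h1 : b^2 * c = (R^2 * c) / (Nt (t+1))^2 := by rw [hb]; ring
      have h2 : c * R * (R / (Nt t * Nt (t+1))) = (R^2 * c) / (Nt t * Nt (t+1)) := by ring
      rw [e, h1, h2]
      have hle : Nt t ≤ Nt (t+1) := by rw [hNt t]; linarith
      rw [div_le_div_iff_of_pos_left (by positivity) (by positivity) (by positivity)]
      nlinarith
    calc ∫ ω, (π (t+1) ω - c) ^ 2 ∂μ
        ≤ ∫ ω, (π t ω - c) ^ 2 ∂μ + b^2 * c := hstep
      _ ≤ c * R * (1 / Nt 0 - 1 / Nt t) + c * R * (1 / Nt t - 1 / Nt (t+1)) :=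
          add_le_add hvar hb2
      _ = c * R * (1 / Nt 0 - 1 / Nt (t+1)) := by ring


/-- For the Pólya urn with constant reward `R > 0`, if the initial endowment
`n_{k,0} = f(N)` satisfies `f(N) → ∞` as `N → ∞`, then for each `ε > 0` and each time
`t ≥ 1` (or `t = ∞`), `P(|π_{k,t}/π_{k,0} − 1| > ε) ≤ 5R/(4 ε² f(N))`, a bound which
tends to `0` as `N → ∞`.  The family of urn models is indexed by `ν`, the model of
index `ν` having total initial coins `Nval ν → ∞` and investor `k` initially owning
`f ν` coins.  `πlim` denotes the almost sure limit of the share martingale. -/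
theorem pos_share_concentration_large_investor_constant_reward
    {Ω : ℕ → Type*} {m0 : ∀ ν, MeasurableSpace (Ω ν)}
    (μ : ∀ ν, Measure (Ω ν)) [∀ ν, IsProbabilityMeasure (μ ν)]
    (𝓕 : ∀ ν, Filtration ℕ (m0 ν))
    (π : ∀ ν, ℕ → Ω ν → ℝ) (πlim : ∀ ν, Ω ν → ℝ) (S : ∀ ν, ℕ → Set (Ω ν))
    (R : ℝ) (Nval f : ℕ → ℝ) (Nt : ℕ → ℕ → ℝ)
    (hR : 0 < R)
    (hNval : Tendsto Nval atTop atTop)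
    (hf : Tendsto f atTop atTop)
    (hfN : ∀ ν, 0 < f ν ∧ f ν ≤ Nval ν)
    (hN0 : ∀ ν, Nt ν 0 = Nval ν)
    (hNt : ∀ ν t, Nt ν (t + 1) = Nt ν t + R)
    (hadapted : ∀ ν, Adapted (𝓕 ν) (π ν))
    (hmem : ∀ ν t ω, π ν t ω ∈ Set.Icc (0 : ℝ) 1)
    (hSmeas : ∀ ν t, MeasurableSet[𝓕 ν (t + 1)] (S ν (t + 1)))
    (hcond : ∀ ν t,
      (μ ν)[(S ν (t + 1)).indicator (fun _ => (1 : ℝ)) | 𝓕 ν t] =ᵐ[μ ν] π ν t)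
    (hrec : ∀ ν t, π ν (t + 1) = fun ω =>
      (Nt ν t / Nt ν (t + 1)) * π ν t ω
        + (R / Nt ν (t + 1)) * (S ν (t + 1)).indicator 1 ω)
    (hπ0 : ∀ ν, π ν 0 = fun _ => f ν / Nval ν)
    (hlim : ∀ ν, ∀ᵐ ω ∂(μ ν), Tendsto (fun t => π ν t ω) atTop (nhds (πlim ν ω))) :
    ∀ ε > (0 : ℝ),
      (∀ ν, (∀ t : ℕ, 1 ≤ t →
          (μ ν {ω | ε < |π ν t ω / (f ν / Nval ν) - 1|}).toReal
            ≤ 5 * R / (4 * ε ^ 2 * f ν)) ∧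
        (μ ν {ω | ε < |πlim ν ω / (f ν / Nval ν) - 1|}).toReal
            ≤ 5 * R / (4 * ε ^ 2 * f ν)) ∧
      Tendsto (fun ν => 5 * R / (4 * ε ^ 2 * f ν)) atTop (nhds 0) := by
  intro ε hε
  constructor
  · intro ν
    obtain ⟨hf0, hfle⟩ := hfN ν
    have hN : 0 < Nval ν := lt_of_lt_of_le hf0 hfle
    set c := f ν / Nval ν with hc
    have hc0 : 0 < c := by positivity
    have hc1 : c ≤ 1 := div_le_one_of_le₀ hfle hN.le
    have hN0' : 0 < Nt ν 0 := by rw [hN0 ν]; exact hN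
    have hmom := polya_mean_var (μ ν) (𝓕 ν) (π ν) (S ν) R c (Nt ν) hR hc0 hc1 hN0'
      (hNt ν) (hadapted ν) (hmem ν) (hSmeas ν) (hcond ν) (hrec ν) (hπ0 ν)
    have hNpos : ∀ t, 0 < Nt ν t := by
      intro t; induction t with
      | zero => exact hN0'
      | succ t ih => rw [hNt ν t]; linarith
    have hvar : ∀ t, ∫ ω, (π ν t ω - c) ^ 2 ∂(μ ν) ≤ c * R / Nval ν := by
      intro t
      refine (hmom t).2.trans ?_
      have h1 : (0:ℝ) ≤ 1 / Nt ν t := by have := hNpos t; positivity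
      rw [hN0 ν]
      calc c * R * (1 / Nval ν - 1 / Nt ν t) ≤ c * R * (1 / Nval ν) := by
            apply mul_le_mul_of_nonneg_left _ (by positivity)
            linarith
        _ = c * R / Nval ν := by ring
    have hπm : ∀ t, StronglyMeasurable (π ν t) := fun t =>
      ((hadapted ν t).mono ((𝓕 ν).le t) le_rfl).stronglyMeasurable
    have hsqnorm : ∀ (x : ℝ), x ∈ Set.Icc (0:ℝ) 1 → ‖(x - c) ^ 2‖ ≤ (4:ℝ) := by
      intro x hx
      rw [Real.norm_eq_abs, abs_of_nonneg (sq_nonneg _)]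
      nlinarith [hx.1, hx.2]
    have hsqint : ∀ t, Integrable (fun ω => (π ν t ω - c) ^ 2) (μ ν) := by
      intro t
      refine ⟨(((hπm t).sub stronglyMeasurable_const).pow 2).aestronglyMeasurable, ?_⟩
      exact HasFiniteIntegral.of_bounded (C := 4)
        (Eventually.of_forall fun ω => hsqnorm _ (hmem ν t ω))
    have hBbound : c * R / Nval ν / (ε ^ 2 * c ^ 2) ≤ 5 * R / (4 * ε ^ 2 * f ν) := by
      have heq : c * R / Nval ν / (ε ^ 2 * c ^ 2) = R / (ε ^ 2 * f ν) := by
        rw [hc]; field_simp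
      rw [heq, div_le_div_iff₀ (by positivity) (by positivity)]
      nlinarith [mul_pos (mul_pos hR (pow_pos hε 2)) hf0]
    constructor
    · intro t _
      exact (cheb_bound (μ ν) (π ν t) c ε _ hc0 hε (hsqint t) (hvar t)).trans hBbound
    · have hF_meas : ∀ t, AEStronglyMeasurable (fun ω => (π ν t ω - c) ^ 2) (μ ν) :=
        fun t => (hsqint t).1
      have h_bound : ∀ t, ∀ᵐ ω ∂(μ ν), ‖(π ν t ω - c) ^ 2‖ ≤ (4:ℝ) :=
        fun t => Eventually.of_forall fun ω => hsqnorm _ (hmem ν t ω)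
      have h_lim : ∀ᵐ ω ∂(μ ν), Tendsto (fun t => (π ν t ω - c) ^ 2) atTop
          (nhds ((πlim ν ω - c) ^ 2)) :=
        (hlim ν).mono fun ω h => (h.sub_const c).pow 2
      have htend := tendsto_integral_of_dominated_convergence (fun _ => (4:ℝ))
        hF_meas (integrable_const _) h_bound h_lim
      have hlimvar : ∫ ω, (πlim ν ω - c) ^ 2 ∂(μ ν) ≤ c * R / Nval ν :=
        le_of_tendsto htend (Eventually.of_forall hvar)
      have hglim01 : ∀ᵐ ω ∂(μ ν), πlim ν ω ∈ Set.Icc (0:ℝ) 1 :=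
        (hlim ν).mono fun ω h =>
          ⟨ge_of_tendsto' h fun t => (hmem ν t ω).1,
           le_of_tendsto' h fun t => (hmem ν t ω).2⟩
      have hlimint : Integrable (fun ω => (πlim ν ω - c) ^ 2) (μ ν) := by
        refine ⟨aestronglyMeasurable_of_tendsto_ae atTop hF_meas h_lim,
          HasFiniteIntegral.of_bounded (C := 4) ?_⟩
        filter_upwards [hglim01] with ω h using hsqnorm _ h
      exact (cheb_bound (μ ν) (πlim ν) c ε _ hc0 hε hlimint hlimvar).trans hBbound
  · have h1 : Tendsto (fun ν => 4 * ε ^ 2 * f ν) atTop atTop :=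
      hf.const_mul_atTop (by positivity)
    exact Tendsto.div_atTop tendsto_const_nhds h1
end

section
/- Assume the rewards R_t are nonincreasing with limit R̲ > 0. Then the variance coefficients a_t defined by a_1 = (R_1/N_1)², a_{t+1} = a_t + (R_{t+1}/N_{t+1})²(1 − a_t), with N_t = N + Σ_{s≤t} R_s, satisfy for every t ≥ 1: ((N − R_1)·R̲²·t)/(N(N + R_1)(N + R_1(1+t))) ≤ a_t ≤ R_1/N. -/
open Filter

theorem my_aux1 (Nv R1 x r r' A : ℝ) (hN : 0 < Nv) (hR1 : 0 < R1) (hx : Nv ≤ x)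
    (hr : 0 < r) (hr'0 : 0 < r') (hr' : r' ≤ r)
    (hIH : Nv / (Nv + R1) * ((x + r) / x) ≤ A) :
    Nv / (Nv + R1) * ((x + r + r') / (x + r)) ≤ (1 - (r / (x + r)) ^ 2) * A := by
  have hx0 : 0 < x := lt_of_lt_of_le hN hx
  have hy : 0 < x + r := by linarith
  have hM : 0 < Nv + R1 := by linarith
  have hq : 0 ≤ 1 - (r / (x + r)) ^ 2 := by
    have h1 : (r / (x + r)) ^ 2 ≤ 1 := by
      rw [div_pow, div_le_one (by positivity)]
      nlinarith
    linarith
  have hid : (1 - (r / (x + r)) ^ 2) * (Nv / (Nv + R1) * ((x + r) / x))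
      = Nv / (Nv + R1) * ((x + 2 * r) / (x + r)) := by
    field_simp
    ring
  have key : Nv / (Nv + R1) * ((x + r + r') / (x + r))
      ≤ (1 - (r / (x + r)) ^ 2) * (Nv / (Nv + R1) * ((x + r) / x)) := by
    rw [hid]
    have hnum : (x + r + r') / (x + r) ≤ (x + 2 * r) / (x + r) := by
      apply div_le_div_of_nonneg_right (by linarith) hy.le
    exact mul_le_mul_of_nonneg_left hnum (by positivity)
  calc Nv / (Nv + R1) * ((x + r + r') / (x + r))
      ≤ (1 - (r / (x + r)) ^ 2) * (Nv / (Nv + R1) * ((x + r) / x)) := key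
    _ ≤ (1 - (r / (x + r)) ^ 2) * A := mul_le_mul_of_nonneg_left hIH hq

theorem my_aux2 (Nv R1 Rb m : ℝ) (hR1 : 0 < R1) (hRb : 0 < Rb) (hm : 0 ≤ m)
    (hRN : R1 < Nv) :
    (Nv - R1) * Rb ^ 2 * (m + 1) / (Nv * (Nv + R1) * (Nv + R1 * (2 + m)))
      ≤ (Nv - R1) * Rb ^ 2 * m / (Nv * (Nv + R1) * (Nv + R1 * (1 + m)))
        + (Nv - R1) * Rb ^ 2 / (Nv * (Nv + R1 * (1 + m)) ^ 2) := by
  have hN : 0 < Nv := lt_trans hR1 hRN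
  have hA : 0 < Nv + R1 * (1 + m) := by nlinarith
  have hB : 0 < Nv + R1 * (2 + m) := by nlinarith
  have hM : 0 < Nv + R1 := by linarith
  have hC : 0 < (Nv - R1) * Rb ^ 2 := mul_pos (by linarith) (by positivity)
  have step1 : (Nv - R1) * Rb ^ 2 * (m + 1) / (Nv * (Nv + R1) * (Nv + R1 * (2 + m)))
      = (Nv - R1) * Rb ^ 2 * m / (Nv * (Nv + R1) * (Nv + R1 * (1 + m)))
        + (Nv - R1) * Rb ^ 2 / (Nv * (Nv + R1 * (1 + m)) * (Nv + R1 * (2 + m))) := by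
    field_simp
    ring
  have step2 : (Nv - R1) * Rb ^ 2 / (Nv * (Nv + R1 * (1 + m)) * (Nv + R1 * (2 + m)))
      ≤ (Nv - R1) * Rb ^ 2 / (Nv * (Nv + R1 * (1 + m)) ^ 2) := by
    apply div_le_div_of_nonneg_left hC.le (by positivity)
    nlinarith [mul_pos (mul_pos hN hA) hR1]
  linarith [step2, step1.le]

/-- For nonincreasing rewards `R_t` with limit `R̲ > 0`, the variance coefficients `a_t`
defined by `a_1 = (R_1/N_1)²`, `a_{t+1} = a_t + (R_{t+1}/N_{t+1})² (1 - a_t)` with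
`N_t = N + Σ_{s ≤ t} R_s` satisfy, for every `t ≥ 1`,
`(N − R_1) R̲² t / (N (N + R_1)(N + R_1(1+t))) ≤ a_t ≤ R_1/N`. -/
theorem variance_coeff_bounds_decreasing_reward
    (R : ℕ → ℝ) (Rbar N : ℝ) (Nt a : ℕ → ℝ)
    (hRpos : ∀ t, 1 ≤ t → 0 < R t)
    (hRdec : ∀ t, 1 ≤ t → R (t + 1) ≤ R t)
    (hRbar : 0 < Rbar)
    (hRbar_le : ∀ t, 1 ≤ t → Rbar ≤ R t)
    (hRlim : Tendsto R atTop (nhds Rbar))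
    (hN : R 1 < N)
    (hN0 : Nt 0 = N)
    (hNt : ∀ t, Nt (t + 1) = Nt t + R (t + 1))
    (ha1 : a 1 = (R 1 / Nt 1) ^ 2)
    (harec : ∀ t, 1 ≤ t → a (t + 1) = a t + (R (t + 1) / Nt (t + 1)) ^ 2 * (1 - a t)) :
    ∀ t : ℕ, 1 ≤ t →
      (N - R 1) * Rbar ^ 2 * t / (N * (N + R 1) * (N + R 1 * (1 + t))) ≤ a t ∧
      a t ≤ R 1 / N := by
  have hR1 : 0 < R 1 := hRpos 1 le_rfl
  have hN0' : 0 < N := hR1.trans hN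
  have hM : 0 < N + R 1 := by linarith
  have hRle1 : ∀ t, 1 ≤ t → R t ≤ R 1 := by
    intro t ht
    induction t with
    | zero => omega
    | succ n ih =>
      rcases Nat.lt_or_ge 1 (n + 1) with h | h
      · have hn : 1 ≤ n := by omega
        exact (hRdec n hn).trans (ih hn)
      · have h1 : n + 1 = 1 := by omega
        rw [h1]
  have hNge : ∀ t, N ≤ Nt t := by
    intro t
    induction t with
    | zero => rw [hN0]
    | succ n ih =>
      rw [hNt]
      have := hRpos (n + 1) (by omega)
      linarith
  have hNpos : ∀ t, 0 < Nt t := fun t => lt_of_lt_of_le hN0' (hNge t)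
  have hNub : ∀ t, Nt t ≤ N + t * R 1 := by
    intro t
    induction t with
    | zero => rw [hN0]; push_cast; linarith
    | succ n ih =>
      rw [hNt]
      have := hRle1 (n + 1) (by omega)
      push_cast
      push_cast at ih
      linarith
  have hNstep : ∀ t, Nt t ≤ Nt (t + 1) := by
    intro t
    rw [hNt]
    have := hRpos (t + 1) (by omega)
    linarith
  have hNt1 : Nt 1 = N + R 1 := by rw [hNt 0, hN0]
  have key : ∀ t, 1 ≤ t →
      N / (N + R 1) * (Nt (t + 1) / Nt t) ≤ 1 - a t ∧
      (N - R 1) * Rbar ^ 2 * t / (N * (N + R 1) * (N + R 1 * (1 + t))) ≤ a t := by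
    intro t ht
    induction t, ht using Nat.le_induction with
    | base =>
      constructor
      · have h2 : Nt 2 = N + R 1 + R 2 := by rw [hNt 1, hNt1]
        have hR2 : R 2 ≤ R 1 := hRdec 1 le_rfl
        have hR2p : 0 < R 2 := hRpos 2 (by omega)
        rw [ha1, hNt1, h2, div_pow]
        rw [← sub_nonneg]
        have hid : 1 - R 1 ^ 2 / (N + R 1) ^ 2
            - N / (N + R 1) * ((N + R 1 + R 2) / (N + R 1))
            = N * (R 1 - R 2) / (N + R 1) ^ 2 := by
          field_simp
          ring
        rw [hid]
        apply div_nonneg (by nlinarith) (by positivity)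
      · have e1 : Rbar ^ 2 ≤ R 1 ^ 2 :=
          pow_le_pow_left₀ hRbar.le (hRbar_le 1 le_rfl) 2
        rw [ha1, hNt1, div_pow]
        push_cast
        rw [div_le_div_iff₀ (by positivity) (by positivity)]
        nlinarith [e1, mul_le_mul_of_nonneg_right
            (mul_le_mul (by linarith : N - R 1 ≤ N) e1 (by positivity) hN0'.le)
            (sq_nonneg (N + R 1)),
          mul_pos hN0' hR1, mul_pos hM hM, sq_nonneg (N + R 1),
          mul_le_mul_of_nonneg_left (by linarith : N + R 1 ≤ N + R 1 * (1 + 1))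
            (by positivity : (0:ℝ) ≤ R 1 ^ 2 * N * (N + R 1))]
    | succ n hn ih =>
      obtain ⟨ih1, ih2⟩ := ih
      have harec' := harec n hn
      have hy : Nt (n + 1) = Nt n + R (n + 1) := hNt n
      have hz : Nt (n + 2) = Nt (n + 1) + R (n + 2) := hNt (n + 1)
      have hr : 0 < R (n + 1) := hRpos (n + 1) (by omega)
      have hr' : 0 < R (n + 2) := hRpos (n + 2) (by omega)
      have hrr : R (n + 2) ≤ R (n + 1) := hRdec (n + 1) (by omega)
      have hxN : N ≤ Nt n := hNge n
      constructor
      · have := my_aux1 N (R 1) (Nt n) (R (n + 1)) (R (n + 2)) (1 - a n)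
          hN0' hR1 hxN hr hr' hrr (by rw [← hy]; exact ih1)
        rw [← hy, ← hz] at this
        calc N / (N + R 1) * (Nt (n + 1 + 1) / Nt (n + 1))
            ≤ (1 - (R (n + 1) / Nt (n + 1)) ^ 2) * (1 - a n) := this
          _ = 1 - a (n + 1) := by rw [harec']; ring
      · -- lower bound step
        have hA : Nt (n + 1) ≤ N + R 1 * (1 + n) := by
          have := hNub (n + 1)
          push_cast at this ⊢
          linarith
        have hApos : 0 < N + R 1 * (1 + (n : ℝ)) := by positivity
        have h1an : (N - R 1) / N ≤ 1 - a n := by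
          have h1 : N / (N + R 1) ≤ N / (N + R 1) * (Nt (n + 1) / Nt n) := by
            nth_rewrite 1 [← mul_one (N / (N + R 1))]
            apply mul_le_mul_of_nonneg_left _ (by positivity)
            rw [le_div_iff₀ (hNpos n)]
            have := hNstep n
            linarith
          have h2 : (N - R 1) / N ≤ N / (N + R 1) := by
            rw [div_le_div_iff₀ hN0' hM]
            nlinarith
          linarith
        have hinc : (N - R 1) * Rbar ^ 2 / (N * (N + R 1 * (1 + n)) ^ 2)
            ≤ (R (n + 1) / Nt (n + 1)) ^ 2 * (1 - a n) := by
          have hq : Rbar / (N + R 1 * (1 + n)) ≤ R (n + 1) / Nt (n + 1) := by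
            rw [div_le_div_iff₀ hApos (hNpos (n + 1))]
            have h3 := hRbar_le (n + 1) (by omega)
            nlinarith [hNpos (n + 1)]
          have hq2 : (Rbar / (N + R 1 * (1 + n))) ^ 2 ≤ (R (n + 1) / Nt (n + 1)) ^ 2 := by
            apply pow_le_pow_left₀ (by positivity) hq
          calc (N - R 1) * Rbar ^ 2 / (N * (N + R 1 * (1 + n)) ^ 2)
              = (Rbar / (N + R 1 * (1 + n))) ^ 2 * ((N - R 1) / N) := by
                field_simp
            _ ≤ (R (n + 1) / Nt (n + 1)) ^ 2 * (1 - a n) := by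
                apply mul_le_mul hq2 h1an (by apply div_nonneg <;> linarith) (by positivity)
        have hstep := my_aux2 N (R 1) Rbar (n : ℝ) hR1 hRbar (by positivity) hN
        have hgoal : (N - R 1) * Rbar ^ 2 * (n + 1) / (N * (N + R 1) * (N + R 1 * (2 + n)))
            ≤ a (n + 1) := by
          rw [harec']
          calc (N - R 1) * Rbar ^ 2 * ((n : ℝ) + 1) / (N * (N + R 1) * (N + R 1 * (2 + n)))
              ≤ (N - R 1) * Rbar ^ 2 * n / (N * (N + R 1) * (N + R 1 * (1 + n)))
                + (N - R 1) * Rbar ^ 2 / (N * (N + R 1 * (1 + n)) ^ 2) := hstep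
            _ ≤ a n + (R (n + 1) / Nt (n + 1)) ^ 2 * (1 - a n) := add_le_add ih2 hinc
        push_cast
        rw [show N + R 1 * (1 + ((n : ℝ) + 1)) = N + R 1 * (2 + (n : ℝ)) by ring]
        exact hgoal
  intro t ht
  obtain ⟨h1, h2⟩ := key t ht
  refine ⟨h2, ?_⟩
  have h3 : N / (N + R 1) ≤ N / (N + R 1) * (Nt (t + 1) / Nt t) := by
    nth_rewrite 1 [← mul_one (N / (N + R 1))]
    apply mul_le_mul_of_nonneg_left _ (by positivity)
    rw [le_div_iff₀ (hNpos t)]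
    have := hNstep t
    linarith
  have h4 : a t ≤ R 1 / (N + R 1) := by
    have : N / (N + R 1) ≤ 1 - a t := le_trans h3 h1
    have hid : (1 : ℝ) - N / (N + R 1) = R 1 / (N + R 1) := by field_simp; ring
    linarith [hid ▸ (by linarith : a t ≤ 1 - N / (N + R 1))]
  calc a t ≤ R 1 / (N + R 1) := h4
    _ ≤ R 1 / N := by apply div_le_div_of_nonneg_left hR1.le hN0'; linarith
end

section
/- Assume R_t = Θ(t^{−α}) with 0 < α < 1/2 and R_t nonincreasing. Then there exist constants C > c > 0, independent of t and N, such that c·N^{−1/(1−α)} ≤ a_t ≤ C·N^{−1/(1−α)} for all t ≥ N^{1/(1−α)}, where a_t is the variance coefficient defined by a_1 = (R_1/N_1)², a_{t+1} = a_t + (R_{t+1}/N_{t+1})²(1−a_t) and N_t = N + Σ_{s≤t} R_s. -/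
open Filter Real

private lemma aux_sum_rpow_le {β : ℝ} (hβ0 : 0 < β) (hβ1 : β < 1) (m : ℕ) :
    ∑ s ∈ Finset.Ioc 0 m, (s : ℝ) ^ (-β) ≤ (m : ℝ) ^ (1 - β) / (1 - β) := by
  have h1β : (0:ℝ) < 1 - β := by linarith
  induction m with
  | zero => simp [Real.zero_rpow (by linarith : (1:ℝ) - β ≠ 0)]
  | succ m ih =>
    rw [Finset.sum_Ioc_succ_top (Nat.zero_le m)]
    have hm1 : (0:ℝ) < (m:ℝ) + 1 := by positivity
    have hs : (-1:ℝ) ≤ -(1/((m:ℝ)+1)) := by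
      have : 1/((m:ℝ)+1) ≤ 1 := by
        rw [div_le_one hm1]; linarith
      linarith
    have hber := rpow_one_add_le_one_add_mul_self hs (le_of_lt h1β) (by linarith : (1:ℝ) - β ≤ 1)
    have h1 : (1:ℝ) + -(1/((m:ℝ)+1)) = (m:ℝ)/((m:ℝ)+1) := by field_simp; ring
    rw [h1] at hber
    have hkey : (m:ℝ) ^ (1-β) + (1-β) * ((m:ℝ)+1) ^ (-β) ≤ ((m:ℝ)+1) ^ (1-β) := by
      have hdiv : ((m:ℝ)/((m:ℝ)+1)) ^ (1-β) = (m:ℝ) ^ (1-β) / ((m:ℝ)+1) ^ (1-β) :=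
        Real.div_rpow (Nat.cast_nonneg m) hm1.le _
      have hpos : (0:ℝ) < ((m:ℝ)+1) ^ (1-β) := Real.rpow_pos_of_pos hm1 _
      have h2 := mul_le_mul_of_nonneg_right hber hpos.le
      rw [hdiv, div_mul_cancel₀ _ hpos.ne'] at h2
      have h3 : (1 + (1-β) * -(1/((m:ℝ)+1))) * ((m:ℝ)+1) ^ (1-β)
          = ((m:ℝ)+1) ^ (1-β) - (1-β) * (((m:ℝ)+1) ^ (1-β) / ((m:ℝ)+1)) := by ring
      have h4 : ((m:ℝ)+1) ^ (1-β) / ((m:ℝ)+1) = ((m:ℝ)+1) ^ (-β) := by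
        rw [show ((m:ℝ)+1) ^ (1-β) / ((m:ℝ)+1)
            = ((m:ℝ)+1) ^ (1-β) / ((m:ℝ)+1) ^ (1:ℝ) by rw [Real.rpow_one]]
        rw [← Real.rpow_sub hm1]
        norm_num
      rw [h3, h4] at h2
      linarith
    have hc : ((m+1:ℕ):ℝ) = (m:ℝ)+1 := by push_cast; ring
    rw [hc]
    have hfin : (m:ℝ)^(1-β)/(1-β) + ((m:ℝ)+1)^(-β) ≤ ((m:ℝ)+1)^(1-β)/(1-β) := by
      rw [div_add' _ _ _ h1β.ne']
      gcongr
      linarith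
    linarith

private lemma aux_sum_rpow_ge {α : ℝ} (hα0 : 0 < α) (m : ℕ) (hm : 1 ≤ m) :
    (m:ℝ) ^ (1 - α) ≤ ∑ u ∈ Finset.Ioc 0 m, (u:ℝ) ^ (-α) := by
  have hmpos : (0:ℝ) < m := by exact_mod_cast hm
  have h := Finset.card_nsmul_le_sum (Finset.Ioc 0 m) (fun u => (u:ℝ) ^ (-α)) ((m:ℝ) ^ (-α))
    (fun u hu => by
      simp only [Finset.mem_Ioc] at hu
      exact Real.rpow_le_rpow_of_nonpos (by exact_mod_cast hu.1) (by exact_mod_cast hu.2)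
        (by linarith))
  rw [Nat.card_Ioc, Nat.sub_zero, nsmul_eq_mul] at h
  rw [show (1:ℝ) - α = 1 + -α from by ring, Real.rpow_add hmpos, Real.rpow_one]
  exact h

private lemma aux_sum_inv_sq {m : ℕ} (hm : 1 ≤ m) (t : ℕ) :
    ∑ s ∈ Finset.Ioc m t, ((s:ℝ)⁻¹) ^ 2 ≤ ((m:ℝ))⁻¹ := by
  have key : ∀ u : ℕ, m ≤ u → ∑ s ∈ Finset.Ioc m u, ((s:ℝ)⁻¹) ^ 2 ≤ (m:ℝ)⁻¹ - (u:ℝ)⁻¹ := by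
    intro u hu
    induction u, hu using Nat.le_induction with
    | base => simp
    | succ u hu ih =>
      rw [Finset.sum_Ioc_succ_top hu]
      have hu0 : (0:ℝ) < u := by
        have : 1 ≤ u := le_trans hm hu
        exact_mod_cast this
      have hu1 : (0:ℝ) < (u:ℝ)+1 := by linarith
      have hstep : (((u:ℝ)+1)⁻¹) ^ 2 ≤ (u:ℝ)⁻¹ - ((u:ℝ)+1)⁻¹ := by
        have heq : (u:ℝ)⁻¹ - ((u:ℝ)+1)⁻¹ = ((u:ℝ)*((u:ℝ)+1))⁻¹ := by
          field_simp
          ring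
        rw [heq, inv_pow]
        apply inv_anti₀ (by positivity)
        nlinarith
      push_cast
      push_cast at ih
      linarith
  rcases le_or_gt t m with h | h
  · rw [Finset.Ioc_eq_empty (by omega)]
    simp
  · have h2 := key t h.le
    have : (0:ℝ) ≤ (t:ℝ)⁻¹ := by positivity
    linarith

set_option maxHeartbeats 2000000 in
/-- For nonincreasing rewards `R_t = Θ(t^{−α})` with `0 < α < 1/2`, there exist constants
`C > c > 0` independent of `t` and of the initial supply `N` such that
`c N^{−1/(1−α)} ≤ a_t ≤ C N^{−1/(1−α)}` for all `t ≥ N^{1/(1−α)}`, where `a_t` is the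
variance coefficient defined by `a_1 = (R_1/N_1)²`,
`a_{t+1} = a_t + (R_{t+1}/N_{t+1})² (1−a_t)` and `N_t = N + Σ_{s ≤ t} R_s`. -/
theorem variance_coeff_bounds_slow_decreasing_reward
    (R : ℕ → ℝ) (α cR CR : ℝ) (Nt : ℝ → ℕ → ℝ) (a : ℝ → ℕ → ℝ)
    (hα0 : 0 < α) (hα : α < 1 / 2) (hcR : 0 < cR)
    (hΘ : ∀ t : ℕ, 1 ≤ t → cR * (t : ℝ) ^ (-α) ≤ R t ∧ R t ≤ CR * (t : ℝ) ^ (-α))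
    (hRdec : ∀ t, 1 ≤ t → R (t + 1) ≤ R t)
    (hN0 : ∀ N : ℝ, Nt N 0 = N)
    (hNt : ∀ N : ℝ, ∀ t, Nt N (t + 1) = Nt N t + R (t + 1))
    (ha1 : ∀ N : ℝ, a N 1 = (R 1 / Nt N 1) ^ 2)
    (harec : ∀ N : ℝ, ∀ t, 1 ≤ t →
      a N (t + 1) = a N t + (R (t + 1) / Nt N (t + 1)) ^ 2 * (1 - a N t)) :
    ∃ c C : ℝ, 0 < c ∧ c < C ∧
      ∀ N : ℝ, 1 ≤ N → ∀ t : ℕ, N ^ (1 / (1 - α)) ≤ (t : ℝ) →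
        c * N ^ (-(1 / (1 - α))) ≤ a N t ∧ a N t ≤ C * N ^ (-(1 / (1 - α))) := by
  have h1α : (0:ℝ) < 1 - α := by linarith
  have h12α : (0:ℝ) < 1 - 2*α := by linarith
  have hRlb : ∀ s : ℕ, 1 ≤ s → cR * (s:ℝ) ^ (-α) ≤ R s := fun s hs => (hΘ s hs).1
  have hRub : ∀ s : ℕ, 1 ≤ s → R s ≤ CR * (s:ℝ) ^ (-α) := fun s hs => (hΘ s hs).2
  have hRpos : ∀ s : ℕ, 1 ≤ s → 0 < R s := by
    intro s hs
    have hs0 : (0:ℝ) < s := by exact_mod_cast hs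
    calc (0:ℝ) < cR * (s:ℝ) ^ (-α) := by positivity
      _ ≤ R s := hRlb s hs
  have hCR : 0 < CR := by
    have h1 := (hΘ 1 le_rfl).2
    have h2 := hRpos 1 le_rfl
    simp only [Nat.cast_one, Real.one_rpow, mul_one] at h1
    linarith
  -- constants
  set K₁ : ℝ := 1 + 2*CR/(1-α) with hK₁def
  have hK₁ : 0 < K₁ := by positivity
  set c₂ : ℝ := cR^2/(4*K₁^2) with hc₂def
  have hc₂ : 0 < c₂ := by positivity
  set C : ℝ := 2*CR^2/(1-2*α) + (CR/cR)^2 with hCdef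
  have hC : 0 < C := by positivity
  refine ⟨min (c₂/(1+c₂)) (C/2), C, lt_min (by positivity) (by positivity),
    lt_of_le_of_lt (min_le_right _ _) (half_lt_self hC), ?_⟩
  intro N hN t hTt
  have hN0' : (0:ℝ) < N := by linarith
  -- basic facts about Nt
  have hNsum : ∀ s : ℕ, Nt N s = N + ∑ u ∈ Finset.Ioc 0 s, R u := by
    intro s
    induction s with
    | zero => simp [hN0]
    | succ s ih => rw [hNt, ih, Finset.sum_Ioc_succ_top (Nat.zero_le s)]; ring
  have hNtge : ∀ s : ℕ, N ≤ Nt N s := by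
    intro s
    rw [hNsum]
    have : (0:ℝ) ≤ ∑ u ∈ Finset.Ioc 0 s, R u :=
      Finset.sum_nonneg fun u hu => (hRpos u (Finset.mem_Ioc.mp hu).1).le
    linarith
  have hNtpos : ∀ s : ℕ, 0 < Nt N s := fun s => lt_of_lt_of_le hN0' (hNtge s)
  have hNtmono : ∀ s s' : ℕ, s ≤ s' → Nt N s ≤ Nt N s' := by
    intro s s' hss
    rw [hNsum, hNsum]
    have : ∑ u ∈ Finset.Ioc 0 s, R u ≤ ∑ u ∈ Finset.Ioc 0 s', R u := by
      apply Finset.sum_le_sum_of_subset_of_nonneg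
      · exact Finset.Ioc_subset_Ioc le_rfl hss
      · intro u hu _; exact (hRpos u (Finset.mem_Ioc.mp hu).1).le
    linarith
  have hNtlb : ∀ s : ℕ, 1 ≤ s → cR * (s:ℝ) ^ (1-α) ≤ Nt N s := by
    intro s hs
    rw [hNsum]
    have h1 : cR * (s:ℝ) ^ (1-α) ≤ cR * ∑ u ∈ Finset.Ioc 0 s, (u:ℝ) ^ (-α) :=
      mul_le_mul_of_nonneg_left (aux_sum_rpow_ge hα0 s hs) hcR.le
    have h2 : cR * ∑ u ∈ Finset.Ioc 0 s, (u:ℝ) ^ (-α) ≤ ∑ u ∈ Finset.Ioc 0 s, R u := by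
      rw [Finset.mul_sum]
      exact Finset.sum_le_sum fun u hu => hRlb u (Finset.mem_Ioc.mp hu).1
    linarith
  have hNtub : ∀ s : ℕ, Nt N s ≤ N + CR * (s:ℝ) ^ (1-α)/(1-α) := by
    intro s
    rw [hNsum]
    have h2 : ∑ u ∈ Finset.Ioc 0 s, R u ≤ CR * ∑ u ∈ Finset.Ioc 0 s, (u:ℝ) ^ (-α) := by
      rw [Finset.mul_sum]
      exact Finset.sum_le_sum fun u hu => hRub u (Finset.mem_Ioc.mp hu).1
    have h3 : CR * ∑ u ∈ Finset.Ioc 0 s, (u:ℝ) ^ (-α) ≤ CR * ((s:ℝ) ^ (1-α)/(1-α)) :=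
      mul_le_mul_of_nonneg_left (aux_sum_rpow_le hα0 (by linarith) s) hCR.le
    have h4 : CR * ((s:ℝ) ^ (1-α)/(1-α)) = CR * (s:ℝ) ^ (1-α)/(1-α) := by ring
    linarith
  -- the q sequence and its partial sums
  set q : ℕ → ℝ := fun s => (R s / Nt N s) ^ 2 with hqdef
  set S : ℕ → ℝ := fun u => ∑ s ∈ Finset.Ioc 0 u, q s with hSdef
  have hqS : ∀ s : ℕ, (R s / Nt N s) ^ 2 = q s := fun s => rfl
  have hSdef' : ∀ u : ℕ, S u = ∑ s ∈ Finset.Ioc 0 u, q s := fun u => rfl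
  clear_value q S
  have hqpos : ∀ s : ℕ, 1 ≤ s → 0 < q s := by
    intro s hs
    have h1 := hRpos s hs
    have h2 := hNtpos s
    rw [← hqS s]
    positivity
  have hqle1 : ∀ s : ℕ, 1 ≤ s → q s ≤ 1 := by
    intro s hs
    have hRle : R s ≤ Nt N s := by
      rw [hNsum]
      have h1 : R s ≤ ∑ u ∈ Finset.Ioc 0 s, R u :=
        Finset.single_le_sum (fun u hu => (hRpos u (Finset.mem_Ioc.mp hu).1).le)
          (Finset.mem_Ioc.mpr ⟨hs, le_rfl⟩)
      linarith
    have h2 : R s / Nt N s ≤ 1 := by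
      rw [div_le_one (hNtpos s)]; exact hRle
    have h3 : 0 ≤ R s / Nt N s := le_of_lt (div_pos (hRpos s hs) (hNtpos s))
    calc q s = (R s / Nt N s)^2 := (hqS s).symm
      _ ≤ 1^2 := by apply pow_le_pow_left₀ h3 h2
      _ = 1 := by norm_num
  have hSpos : ∀ u : ℕ, 1 ≤ u → 0 < S u := by
    intro u hu
    rw [hSdef' u]
    apply Finset.sum_pos
    · intro s hs; exact hqpos s (Finset.mem_Ioc.mp hs).1
    · exact ⟨1, Finset.mem_Ioc.mpr ⟨Nat.one_pos, hu⟩⟩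
  have hSnonneg : ∀ u : ℕ, 0 ≤ S u := by
    intro u
    rw [hSdef' u]
    apply Finset.sum_nonneg
    intro s hs; exact (hqpos s (Finset.mem_Ioc.mp hs).1).le
  -- key sandwich: S u / (1 + S u) ≤ a N u ≤ S u
  have hsandwich : ∀ u : ℕ, 1 ≤ u → S u / (1 + S u) ≤ a N u ∧ a N u ≤ S u := by
    intro u hu
    induction u, hu using Nat.le_induction with
    | base =>
      have hS1 : S 1 = q 1 := by
        rw [hSdef' 1, show Finset.Ioc 0 1 = {1} from rfl, Finset.sum_singleton]
      have ha1' : a N 1 = q 1 := (ha1 N).trans (hqS 1)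
      rw [hS1, ha1']
      constructor
      · apply div_le_self (hqpos 1 le_rfl).le
        linarith [hqpos 1 le_rfl]
      · exact le_refl _
    | succ u hu ih =>
      have hrec := harec N u hu
      have hq' : (R (u + 1) / Nt N (u + 1)) ^ 2 = q (u+1) := hqS (u+1)
      rw [hq'] at hrec
      have hSucc : S (u+1) = S u + q (u+1) := by
        rw [hSdef' (u+1), hSdef' u, Finset.sum_Ioc_succ_top (Nat.zero_le u)]
      have hq1 := hqpos (u+1) (by omega)
      have hq2 := hqle1 (u+1) (by omega)
      have hs0 := hSpos u hu
      have h1S : (0:ℝ) < 1 + S u := by linarith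
      obtain ⟨ihl, ihr⟩ := ih
      constructor
      · -- lower
        rw [hrec, hSucc]
        have step1 : (S u + q (u+1)) / (1 + (S u + q (u+1))) ≤ (S u + q (u+1)) / (1 + S u) := by
          apply div_le_div_of_nonneg_left (by linarith) h1S
          linarith
        have heq : S u/(1+S u)*(1-q (u+1)) + q (u+1) = (S u + q (u+1))/(1+S u) := by
          field_simp
          ring
        have step2 : S u/(1+S u)*(1-q (u+1)) ≤ a N u * (1-q (u+1)) :=
          mul_le_mul_of_nonneg_right ihl (by linarith)
        nlinarith [step1, heq, step2]
      · -- upper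
        rw [hrec, hSucc]
        nlinarith [mul_le_mul_of_nonneg_right ihr (by linarith : (0:ℝ) ≤ 1 - q (u+1))]
  -- notation for T and m
  set T : ℝ := N ^ (1/(1-α)) with hTdef
  clear_value T
  have hTt' : T ≤ (t:ℝ) := hTt
  have hTpos : 0 < T := by rw [hTdef]; exact Real.rpow_pos_of_pos hN0' _
  have hT1 : 1 ≤ T := by rw [hTdef]; exact Real.one_le_rpow hN (by positivity)
  have hP : N ^ (-(1/(1-α))) = T⁻¹ := by
    rw [Real.rpow_neg hN0'.le, hTdef]
  have hTN : T ^ (1-α) = N := by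
    rw [hTdef, ← Real.rpow_mul hN0'.le,
      show (1/(1-α))*(1-α) = 1 by field_simp, Real.rpow_one]
  set m : ℕ := ⌈T⌉₊ with hmdef
  clear_value m
  have hm1 : 1 ≤ m := by
    rw [hmdef]
    have := Nat.ceil_pos.mpr hTpos
    omega
  have hmT : T ≤ (m:ℝ) := by rw [hmdef]; exact Nat.le_ceil T
  have hm2T : (m:ℝ) ≤ 2*T := by
    have h := Nat.ceil_lt_add_one hTpos.le
    have h' : (m:ℝ) < T + 1 := by rw [hmdef]; exact h
    linarith
  have hmt : m ≤ t := by
    rw [hmdef]; exact Nat.ceil_le.mpr hTt'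
  have ht1 : 1 ≤ t := le_trans hm1 hmt
  have hmpos : (0:ℝ) < m := by exact_mod_cast hm1
  have hN2 : N^2 = T ^ (2-2*α) := by
    rw [← hTN, ← Real.rpow_natCast (T ^ (1-α)) 2, ← Real.rpow_mul hTpos.le]
    congr 1
    ring
  have hT12 : T ^ (1-2*α) / N^2 = T⁻¹ := by
    rw [hN2, ← Real.rpow_sub hTpos, show (1-2*α) - (2-2*α) = -1 by ring, Real.rpow_neg_one]
  constructor
  · -- LOWER BOUND
    have hRanti : ∀ s s' : ℕ, 1 ≤ s → s ≤ s' → R s' ≤ R s := by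
      intro s s' hs hss
      induction s', hss using Nat.le_induction with
      | base => exact le_refl _
      | succ s' hss ih => exact le_trans (hRdec s' (le_trans hs hss)) ih
    have hqanti : ∀ s : ℕ, 1 ≤ s → s ≤ m → q m ≤ q s := by
      intro s hs1 hsm
      have hRm : R m ≤ R s := hRanti s m hs1 hsm
      have hm' := hNtmono s m hsm
      have h := div_le_div₀ (hRpos s hs1).le hRm (hNtpos s) hm'
      rw [← hqS m, ← hqS s]
      exact pow_le_pow_left₀ (div_pos (hRpos m hm1) (hNtpos m)).le h 2
    have hcard : (m:ℝ) * q m ≤ S m := by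
      have h := Finset.card_nsmul_le_sum (Finset.Ioc 0 m) q (q m)
        (fun s hs => hqanti s (Finset.mem_Ioc.mp hs).1 (Finset.mem_Ioc.mp hs).2)
      rw [Nat.card_Ioc, Nat.sub_zero, nsmul_eq_mul] at h
      rw [hSdef' m]
      exact h
    have hnum : cR * (T^(-α)/2) ≤ R m := by
      have h1 : T^(-α)/2 ≤ (m:ℝ)^(-α) := by
        have h2 : (2*T)^(-α) ≤ (m:ℝ)^(-α) :=
          Real.rpow_le_rpow_of_nonpos hmpos hm2T (by linarith)
        have h3 : (2*T)^(-α) = 2^(-α) * T^(-α) := Real.mul_rpow (by norm_num) hTpos.le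
        have h4 : (2:ℝ)^(-1:ℝ) ≤ 2^(-α) :=
          Real.rpow_le_rpow_of_exponent_le one_le_two (by linarith)
        rw [Real.rpow_neg_one] at h4
        have h5 : (0:ℝ) < T^(-α) := Real.rpow_pos_of_pos hTpos _
        rw [h3] at h2
        have h6 := mul_le_mul_of_nonneg_right h4 h5.le
        have h7 : T^(-α)/2 = 2⁻¹ * T^(-α) := by ring
        linarith
      calc cR * (T^(-α)/2) ≤ cR * (m:ℝ)^(-α) := by
            apply mul_le_mul_of_nonneg_left h1 hcR.le
        _ ≤ R m := hRlb m hm1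
    have hden : Nt N m ≤ K₁ * N := by
      have h2 : (m:ℝ)^(1-α) ≤ 2*N := by
        calc (m:ℝ)^(1-α) ≤ (2*T)^(1-α) :=
              Real.rpow_le_rpow hmpos.le hm2T (by linarith)
          _ = 2^(1-α)*T^(1-α) := Real.mul_rpow (by norm_num) hTpos.le
          _ ≤ 2*N := by
              rw [hTN]
              have h3 : (2:ℝ)^(1-α) ≤ 2^(1:ℝ) :=
                Real.rpow_le_rpow_of_exponent_le one_le_two (by linarith)
              rw [Real.rpow_one] at h3
              nlinarith
      calc Nt N m ≤ N + CR*(m:ℝ)^(1-α)/(1-α) := hNtub m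
        _ ≤ N + CR*(2*N)/(1-α) := by
            have h4 : CR*(m:ℝ)^(1-α) ≤ CR*(2*N) := mul_le_mul_of_nonneg_left h2 hCR.le
            have h5 : CR*(m:ℝ)^(1-α)/(1-α) ≤ CR*(2*N)/(1-α) := (div_le_div_iff_of_pos_right h1α).mpr h4
            linarith
        _ = K₁ * N := by rw [hK₁def]; ring
    have hqm : (cR * (T^(-α)/2) / (K₁ * N))^2 ≤ q m := by
      rw [← hqS m]
      apply pow_le_pow_left₀ (by positivity)
      exact div_le_div₀ (hRpos m hm1).le hnum (hNtpos m) hden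
    have hT5 : (0:ℝ) < T^(-α) := Real.rpow_pos_of_pos hTpos _
    have hTT : T * (T^(-α))^2 = T^(1-2*α) := by
      rw [← Real.rpow_natCast (T^(-α)) 2, ← Real.rpow_mul hTpos.le]
      rw [show T * T ^ (-α*(2:ℕ)) = T^(1:ℝ) * T^(-α*(2:ℕ)) by rw [Real.rpow_one]]
      rw [← Real.rpow_add hTpos]
      congr 1
      push_cast
      ring
    have heq : T * (cR*(T^(-α)/2)/(K₁*N))^2 = c₂ * (T^(1-2*α)/N^2) := by
      rw [← hTT, hc₂def]
      field_simp
      ring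
    have hlowS : c₂ * T⁻¹ ≤ S t := by
      have h1 : T * (cR*(T^(-α)/2)/(K₁*N))^2 ≤ (m:ℝ) * q m := by
        apply mul_le_mul hmT hqm (by positivity) hmpos.le
      have hStSm : S m ≤ S t := by
        rw [hSdef' m, hSdef' t]
        apply Finset.sum_le_sum_of_subset_of_nonneg
        · exact Finset.Ioc_subset_Ioc le_rfl hmt
        · intro s hs _; exact (hqpos s (Finset.mem_Ioc.mp hs).1).le
      have h2 : c₂ * T⁻¹ = c₂ * (T^(1-2*α)/N^2) := by rw [hT12]
      linarith [heq ▸ h1]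
    rw [hP]
    have hsl := (hsandwich t ht1).1
    have hTinv : (0:ℝ) < T⁻¹ := by positivity
    have hTinv1 : T⁻¹ ≤ 1 := by
      rw [inv_le_one_iff₀]
      right; exact hT1
    have hmono : c₂*T⁻¹/(1+c₂*T⁻¹) ≤ S t/(1+S t) := by
      rw [div_le_div_iff₀ (by positivity) (by linarith [hSnonneg t])]
      nlinarith [hlowS, hSnonneg t, hTinv, hc₂]
    have h2 : (c₂/(1+c₂)) * T⁻¹ ≤ c₂*T⁻¹/(1+c₂*T⁻¹) := by
      rw [div_mul_eq_mul_div, div_le_div_iff₀ (by positivity) (by positivity)]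
      nlinarith [mul_le_mul_of_nonneg_left hTinv1 (by positivity : (0:ℝ) ≤ c₂^2*T⁻¹)]
    have h3 : min (c₂/(1+c₂)) (C/2) * T⁻¹ ≤ (c₂/(1+c₂)) * T⁻¹ :=
      mul_le_mul_of_nonneg_right (min_le_left _ _) hTinv.le
    linarith
  · -- UPPER BOUND
    have h0 := (hsandwich t ht1).2
    have hsplit : S t = S m + ∑ s ∈ Finset.Ioc m t, q s := by
      rw [hSdef' m, hSdef' t]
      rw [← Finset.sum_Ioc_consecutive _ (Nat.zero_le m) hmt]
    have hpart1 : S m ≤ (2*CR^2/(1-2*α)) * T⁻¹ := by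
      have hpoint : ∀ s ∈ Finset.Ioc 0 m, q s ≤ (CR/N)^2 * ((s:ℝ) ^ (-(2*α))) := by
        intro s hs
        obtain ⟨hs1, hs2⟩ := Finset.mem_Ioc.mp hs
        have hs0 : (0:ℝ) < s := by exact_mod_cast hs1
        have hdivle : R s / Nt N s ≤ CR * (s:ℝ)^(-α) / N :=
          div_le_div₀ (by positivity) (hRub s hs1) hN0' (hNtge s)
        have hnn : 0 ≤ R s / Nt N s := (div_pos (hRpos s hs1) (hNtpos s)).le
        calc q s ≤ (CR * (s:ℝ)^(-α) / N)^2 := (hqS s) ▸ pow_le_pow_left₀ hnn hdivle 2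
          _ = (CR/N)^2 * ((s:ℝ)^(-α))^2 := by ring
          _ = (CR/N)^2 * (s:ℝ)^(-(2*α)) := by
            rw [← Real.rpow_natCast ((s:ℝ)^(-α)) 2, ← Real.rpow_mul hs0.le]
            congr 2
            push_cast
            ring
      have hsum := Finset.sum_le_sum hpoint
      rw [← Finset.mul_sum] at hsum
      have hsum2 : ∑ s ∈ Finset.Ioc 0 m, (s:ℝ)^(-(2*α)) ≤ (m:ℝ)^(1-2*α)/(1-2*α) := by
        have := aux_sum_rpow_le (by linarith : (0:ℝ) < 2*α) (by linarith) m
        rwa [show 1-2*α = 1-(2*α) by ring]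
      have hm' : (m:ℝ)^(1-2*α) ≤ 2 * T^(1-2*α) := by
        calc (m:ℝ)^(1-2*α) ≤ (2*T)^(1-2*α) :=
              Real.rpow_le_rpow hmpos.le hm2T (by linarith)
          _ = 2^(1-2*α) * T^(1-2*α) := Real.mul_rpow (by norm_num) hTpos.le
          _ ≤ 2 * T^(1-2*α) := by
              have h2 : (2:ℝ)^(1-2*α) ≤ 2^(1:ℝ) :=
                Real.rpow_le_rpow_of_exponent_le one_le_two (by linarith)
              rw [Real.rpow_one] at h2
              have h3 := Real.rpow_pos_of_pos hTpos (1-2*α)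
              nlinarith
      have hA : S m ≤ (CR/N)^2 * ((m:ℝ)^(1-2*α)/(1-2*α)) := by
        rw [hSdef' m]
        exact le_trans hsum (mul_le_mul_of_nonneg_left hsum2 (by positivity))
      have hB : (CR/N)^2 * ((m:ℝ)^(1-2*α)/(1-2*α)) ≤ (CR/N)^2 * (2*T^(1-2*α)/(1-2*α)) := by
        gcongr
      have hkeyeq : (CR/N)^2 * (2*T^(1-2*α)/(1-2*α)) = (2*CR^2/(1-2*α)) * (T^(1-2*α)/N^2) := by
        field_simp
      rw [hT12] at hkeyeq
      linarith
    have hpart2 : ∑ s ∈ Finset.Ioc m t, q s ≤ (CR/cR)^2 * T⁻¹ := by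
      have hpoint : ∀ s ∈ Finset.Ioc m t, q s ≤ (CR/cR)^2 * ((s:ℝ)⁻¹)^2 := by
        intro s hs
        obtain ⟨hs1, hs2⟩ := Finset.mem_Ioc.mp hs
        have hs1' : 1 ≤ s := by omega
        have hs0 : (0:ℝ) < s := by exact_mod_cast hs1'
        have hdivle : R s / Nt N s ≤ (CR * (s:ℝ)^(-α)) / (cR * (s:ℝ)^(1-α)) := by
          apply div_le_div₀ (by positivity) (hRub s hs1') (by positivity) (hNtlb s hs1')
        have hre : (CR * (s:ℝ)^(-α)) / (cR * (s:ℝ)^(1-α)) = (CR/cR) * (s:ℝ)⁻¹ := by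
          have hinv : (s:ℝ)^(-α) / (s:ℝ)^(1-α) = (s:ℝ)⁻¹ := by
            rw [← Real.rpow_sub hs0, show -α - (1-α) = -1 by ring, Real.rpow_neg_one]
          calc (CR * (s:ℝ)^(-α)) / (cR * (s:ℝ)^(1-α))
              = (CR/cR) * ((s:ℝ)^(-α)/(s:ℝ)^(1-α)) := by ring
            _ = (CR/cR) * (s:ℝ)⁻¹ := by rw [hinv]
        rw [hre] at hdivle
        have hnn : 0 ≤ R s / Nt N s := (div_pos (hRpos s hs1') (hNtpos s)).le
        calc q s ≤ ((CR/cR) * (s:ℝ)⁻¹)^2 := (hqS s) ▸ pow_le_pow_left₀ hnn hdivle 2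
          _ = (CR/cR)^2 * ((s:ℝ)⁻¹)^2 := by ring
      have hsum := Finset.sum_le_sum hpoint
      rw [← Finset.mul_sum] at hsum
      have h2 := aux_sum_inv_sq hm1 t
      have h3 : (m:ℝ)⁻¹ ≤ T⁻¹ := inv_anti₀ hTpos hmT
      calc ∑ s ∈ Finset.Ioc m t, q s ≤ (CR/cR)^2 * (m:ℝ)⁻¹ :=
            le_trans hsum (mul_le_mul_of_nonneg_left h2 (by positivity))
        _ ≤ (CR/cR)^2 * T⁻¹ := mul_le_mul_of_nonneg_left h3 (by positivity)
    rw [hP]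
    calc a N t ≤ S t := h0
      _ = S m + ∑ s ∈ Finset.Ioc m t, q s := hsplit
      _ ≤ (2*CR^2/(1-2*α)) * T⁻¹ + (CR/cR)^2 * T⁻¹ := add_le_add hpart1 hpart2
      _ = C * T⁻¹ := by rw [hCdef]; ring
end

section
/- For the Pólya urn with geometric reward R_t = ρ·N_{t-1}^γ with ρ > 0 and γ > 1, the variance coefficients a_t increase to 1, and consequently the limiting share π_{k,∞} ∈ {0, 1} almost surely with P(π_{k,∞} = 1) = π_{k,0} and P(π_{k,∞} = 0) = 1 − π_{k,0}. -/
open MeasureTheory Filter Set ProbabilityTheory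

/-- For the Pólya urn with geometric reward `R_t = ρ N_{t-1}^γ`, `ρ > 0`, `γ > 1`, the
variance coefficients `a_t` increase to `1`, and the limiting share `π_{k,∞}` lies in
`{0,1}` almost surely, with `P(π_{k,∞} = 1) = π_{k,0}` and
`P(π_{k,∞} = 0) = 1 − π_{k,0}`. -/
theorem pos_share_chaotic_centralization_geometric_reward
    {Ω : Type*} {m0 : MeasurableSpace Ω} (μ : Measure Ω) [IsProbabilityMeasure μ]
    (𝓕 : Filtration ℕ m0)
    (π : ℕ → Ω → ℝ) (πlim : Ω → ℝ) (S : ℕ → Set Ω)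
    (ρ γ N p : ℝ) (R Nt a : ℕ → ℝ)
    (hρ : 0 < ρ) (hγ : 1 < γ) (hN : 0 < N)
    (hN0 : Nt 0 = N)
    (hR : ∀ t, R (t + 1) = ρ * Nt t ^ γ)
    (hNt : ∀ t, Nt (t + 1) = Nt t + R (t + 1))
    (hadapted : Adapted 𝓕 π)
    (hmem : ∀ t ω, π t ω ∈ Set.Icc (0 : ℝ) 1)
    (hSmeas : ∀ t, MeasurableSet[𝓕 (t + 1)] (S (t + 1)))
    (hcond : ∀ t, μ[(S (t + 1)).indicator (fun _ => (1 : ℝ)) | 𝓕 t] =ᵐ[μ] π t)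
    (hrec : ∀ t, π (t + 1) = fun ω =>
      (Nt t / Nt (t + 1)) * π t ω + (R (t + 1) / Nt (t + 1)) * (S (t + 1)).indicator 1 ω)
    (hπ0 : π 0 = fun _ => p)
    (ha1 : a 1 = (R 1 / Nt 1) ^ 2)
    (harec : ∀ t, 1 ≤ t → a (t + 1) = a t + (R (t + 1) / Nt (t + 1)) ^ 2 * (1 - a t))
    (hlim : ∀ᵐ ω ∂μ, Tendsto (fun t => π t ω) atTop (nhds (πlim ω))) :
    Tendsto a atTop (nhds 1) ∧
    (∀ᵐ ω ∂μ, πlim ω = 0 ∨ πlim ω = 1) ∧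
    μ {ω | πlim ω = 1} = ENNReal.ofReal p ∧
    μ {ω | πlim ω = 0} = ENNReal.ofReal (1 - p) := by
  classical
  -- positivity of the urn size
  have hNtpos : ∀ t, 0 < Nt t := by
    intro t
    induction t with
    | zero => rw [hN0]; exact hN
    | succ t ih =>
      rw [hNt, hR]
      have : 0 < ρ * Nt t ^ γ := mul_pos hρ (Real.rpow_pos_of_pos ih γ)
      linarith
  have hRpos : ∀ t, 0 < R (t + 1) := fun t => by
    rw [hR]; exact mul_pos hρ (Real.rpow_pos_of_pos (hNtpos t) γ)
  have hr01 : ∀ t, 0 < R (t + 1) / Nt (t + 1) ∧ R (t + 1) / Nt (t + 1) < 1 := by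
    intro t
    constructor
    · exact div_pos (hRpos t) (hNtpos (t + 1))
    · rw [div_lt_one (hNtpos (t + 1)), hNt]; linarith [hNtpos t]
  have hb01 : ∀ t, 0 < (R (t + 1) / Nt (t + 1)) ^ 2 ∧ (R (t + 1) / Nt (t + 1)) ^ 2 < 1 := by
    intro t
    obtain ⟨h1, h2⟩ := hr01 t
    constructor
    · positivity
    · nlinarith
  -- the key rpow splitting
  have hsplit : ∀ t, Nt t ^ γ = Nt t * Nt t ^ (γ - 1) := by
    intro t
    have h := Real.rpow_add (hNtpos t) 1 (γ - 1)
    rw [show (1 : ℝ) + (γ - 1) = γ by ring, Real.rpow_one] at h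
    exact h
  -- geometric growth of Nt
  have hNge : ∀ t, N ≤ Nt t := by
    intro t
    induction t with
    | zero => rw [hN0]
    | succ t ih => rw [hNt]; linarith [hRpos t]
  have hc : 0 < ρ * N ^ (γ - 1) := mul_pos hρ (Real.rpow_pos_of_pos hN _)
  have hgrow : ∀ t, (1 + ρ * N ^ (γ - 1)) * Nt t ≤ Nt (t + 1) := by
    intro t
    have h2 : N ^ (γ - 1) ≤ Nt t ^ (γ - 1) :=
      Real.rpow_le_rpow hN.le (hNge t) (by linarith)
    have h4 : ρ * Nt t * N ^ (γ - 1) ≤ ρ * Nt t * Nt t ^ (γ - 1) :=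
      mul_le_mul_of_nonneg_left h2 (mul_pos hρ (hNtpos t)).le
    rw [hNt, hR, hsplit t]
    nlinarith
  have hNgeo : ∀ t, N * (1 + ρ * N ^ (γ - 1)) ^ t ≤ Nt t := by
    intro t
    induction t with
    | zero => simp [hN0]
    | succ t ih =>
      calc N * (1 + ρ * N ^ (γ - 1)) ^ (t + 1)
          = (1 + ρ * N ^ (γ - 1)) * (N * (1 + ρ * N ^ (γ - 1)) ^ t) := by ring
        _ ≤ (1 + ρ * N ^ (γ - 1)) * Nt t := by nlinarith
        _ ≤ Nt (t + 1) := hgrow t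
  have hNtop : Tendsto Nt atTop atTop := by
    apply tendsto_atTop_mono hNgeo
    exact Tendsto.const_mul_atTop hN
      (tendsto_pow_atTop_atTop_of_one_lt (by linarith))
  have hu : Tendsto (fun t => ρ * Nt t ^ (γ - 1)) atTop atTop :=
    Tendsto.const_mul_atTop hρ
      ((tendsto_rpow_atTop (by linarith : (0:ℝ) < γ - 1)).comp hNtop)
  have hrval : ∀ t, R (t + 1) / Nt (t + 1) = 1 - (1 + ρ * Nt t ^ (γ - 1))⁻¹ := by
    intro t
    have hpos := hNtpos t
    have hp2 : 0 < Nt t ^ (γ - 1) := Real.rpow_pos_of_pos hpos _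
    have d2 : (0:ℝ) < 1 + ρ * Nt t ^ (γ - 1) := by positivity
    have d1 : (0:ℝ) < Nt t + ρ * (Nt t * Nt t ^ (γ - 1)) := by positivity
    rw [hNt, hR, hsplit t]
    field_simp
    ring
  have hrlim : Tendsto (fun t => R (t + 1) / Nt (t + 1)) atTop (nhds 1) := by
    simp only [hrval]
    have h0 : Tendsto (fun t => (1 + ρ * Nt t ^ (γ - 1))⁻¹) atTop (nhds 0) :=
      Tendsto.inv_tendsto_atTop (tendsto_atTop_add_const_left _ 1 hu)
    simpa using tendsto_const_nhds.sub h0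
  have hblim : Tendsto (fun t => (R (t + 1) / Nt (t + 1)) ^ 2) atTop (nhds 1) := by
    have := hrlim.pow 2
    simpa using this
  -- bounds on a
  have ha01 : ∀ t, 1 ≤ t → 0 ≤ a t ∧ a t ≤ 1 := by
    intro t ht
    induction t with
    | zero => omega
    | succ t ih =>
      rcases Nat.lt_or_ge t 1 with h | h
      · have h0 : t = 0 := by omega
        subst h0
        rw [ha1]
        obtain ⟨h1, h2⟩ := hr01 0
        exact ⟨by positivity, by nlinarith⟩
      · obtain ⟨l, u⟩ := ih h
        rw [harec t h]
        obtain ⟨b1, b2⟩ := hb01 t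
        constructor <;> nlinarith
  -- a tends to 1
  have halim : Tendsto a atTop (nhds 1) := by
    have key : Tendsto (fun t => 1 - a (t + 2)) atTop (nhds 0) := by
      have hb0 : Tendsto (fun t => 1 - (R (t + 2) / Nt (t + 2)) ^ 2) atTop (nhds 0) := by
        have h1 : Tendsto (fun t => 1 - (R (t + 1) / Nt (t + 1)) ^ 2) atTop (nhds 0) := by
          have := (tendsto_const_nhds : Tendsto (fun _ : ℕ => (1:ℝ)) atTop (nhds 1)).sub hblim
          simpa using this
        exact h1.comp (tendsto_add_atTop_nat 1)
      apply squeeze_zero (fun t => ?_) (fun t => ?_) hb0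
      · have := ha01 (t + 2) (by omega); linarith [this.2]
      · have heq : 1 - a (t + 1 + 1)
            = (1 - (R (t + 1 + 1) / Nt (t + 1 + 1)) ^ 2) * (1 - a (t + 1)) := by
          rw [harec (t + 1) (by omega)]; ring
        have h1 := ha01 (t + 1) (by omega)
        have h2 := hb01 (t + 1)
        rw [show t + 2 = t + 1 + 1 from rfl, heq]
        nlinarith [h1.1, h1.2, h2.1, h2.2]
    have h2 : Tendsto (fun t => a (t + 2)) atTop (nhds 1) := by
      have := (tendsto_const_nhds : Tendsto (fun _ : ℕ => (1:ℝ)) atTop (nhds 1)).sub key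
      simpa using this
    exact (tendsto_add_atTop_iff_nat 2).mp h2
  -- measurability and integrability
  have hπsm : ∀ t, StronglyMeasurable (π t) := fun t => ((hadapted t).mono (𝓕.le t) le_rfl).stronglyMeasurable
  have hπint : ∀ t, Integrable (π t) μ := by
    intro t
    refine Integrable.mono' (integrable_const 1) (hπsm t).aestronglyMeasurable ?_
    refine Eventually.of_forall fun ω => ?_
    have h := hmem t ω
    simp only [Real.norm_eq_abs, abs_le]
    exact ⟨by linarith [h.1], h.2⟩
  have hSm : ∀ t, MeasurableSet (S (t + 1)) := fun t => (𝓕.le (t + 1)) _ (hSmeas t)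
  have hIint : ∀ t, Integrable ((S (t + 1)).indicator (fun _ => (1 : ℝ))) μ :=
    fun t => (integrable_const 1).indicator (hSm t)
  have hindval : ∀ t ω,
      ((S (t + 1)).indicator (fun _ => (1 : ℝ)) ω) * ((S (t + 1)).indicator (fun _ => (1 : ℝ)) ω)
        = (S (t + 1)).indicator (fun _ => (1 : ℝ)) ω := by
    intro t ω
    by_cases h : ω ∈ S (t + 1) <;> simp [Set.indicator_apply, h]
  have hindmem : ∀ t ω, 0 ≤ (S (t + 1)).indicator (fun _ => (1 : ℝ)) ω ∧
      (S (t + 1)).indicator (fun _ => (1 : ℝ)) ω ≤ 1 := by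
    intro t ω
    by_cases h : ω ∈ S (t + 1) <;> simp [Set.indicator_apply, h]
  -- first moment recursion: ∫ indicator = ∫ π t
  have hSint : ∀ t, ∫ ω, (S (t + 1)).indicator (fun _ => (1 : ℝ)) ω ∂μ = ∫ ω, π t ω ∂μ := by
    intro t
    rw [← integral_condExp (𝓕.le t)]
    exact integral_congr_ae (hcond t)
  have hI : ∀ t, ∫ ω, π t ω ∂μ = p := by
    intro t
    induction t with
    | zero => rw [hπ0]; simp
    | succ t ih =>
      have hrw := hrec t
      have h1 : Nt t / Nt (t + 1) + R (t + 1) / Nt (t + 1) = 1 := by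
        rw [← add_div, ← hNt t]
        exact div_self (hNtpos (t + 1)).ne'
      calc ∫ ω, π (t + 1) ω ∂μ
          = ∫ ω, (Nt t / Nt (t + 1)) * π t ω
              + (R (t + 1) / Nt (t + 1)) * (S (t + 1)).indicator (fun _ => (1:ℝ)) ω ∂μ := by
            rw [hrw]
            rfl
        _ = (Nt t / Nt (t + 1)) * ∫ ω, π t ω ∂μ
              + (R (t + 1) / Nt (t + 1)) * ∫ ω, (S (t + 1)).indicator (fun _ => (1:ℝ)) ω ∂μ := by
            have i1 : Integrable (fun ω => (Nt t / Nt (t + 1)) * π t ω) μ :=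
              (hπint t).const_mul _
            have i2 : Integrable (fun ω => (R (t + 1) / Nt (t + 1))
                * (S (t + 1)).indicator (fun _ => (1:ℝ)) ω) μ :=
              (hIint t).const_mul _
            rw [integral_add i1 i2, integral_const_mul, integral_const_mul]
        _ = p := by rw [hSint t, ih]; linear_combination p * h1
  -- integrability of products
  have hmulint : ∀ t, Integrable (π t * ((S (t + 1)).indicator (fun _ => (1 : ℝ)))) μ := by
    intro t
    refine Integrable.mono' (integrable_const 1)
      (((hπsm t).mul (stronglyMeasurable_one.indicator (hSm t))).aestronglyMeasurable) ?_
    refine Eventually.of_forall fun ω => ?_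
    have h1 := hmem t ω
    have h2 := hindmem t ω
    simp only [Pi.mul_apply, Real.norm_eq_abs, abs_le]
    constructor <;> nlinarith [h1.1, h1.2, h2.1, h2.2]
  have hsqint : ∀ t, Integrable (fun ω => π t ω * π t ω) μ := by
    intro t
    refine Integrable.mono' (integrable_const 1)
      (((hπsm t).mul (hπsm t)).aestronglyMeasurable) ?_
    refine Eventually.of_forall fun ω => ?_
    have h1 := hmem t ω
    simp only [Real.norm_eq_abs, abs_le]
    constructor <;> nlinarith [h1.1, h1.2]
  -- pull-out property
  have hmul : ∀ t, ∫ ω, π t ω * (S (t + 1)).indicator (fun _ => (1 : ℝ)) ω ∂μ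
      = ∫ ω, π t ω * π t ω ∂μ := by
    intro t
    have hpull := condExp_mul_of_stronglyMeasurable_left (hadapted t).stronglyMeasurable (hmulint t) (hIint t)
    calc ∫ ω, π t ω * (S (t + 1)).indicator (fun _ => (1 : ℝ)) ω ∂μ
        = ∫ ω, (μ[π t * ((S (t + 1)).indicator (fun _ => (1 : ℝ))) | 𝓕 t]) ω ∂μ :=
          (integral_condExp (𝓕.le t)).symm
      _ = ∫ ω, π t ω * (μ[(S (t + 1)).indicator (fun _ => (1 : ℝ)) | 𝓕 t]) ω ∂μ := by
          refine integral_congr_ae (hpull.mono fun ω h => ?_)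
          simpa using h
      _ = ∫ ω, π t ω * π t ω ∂μ := by
          refine integral_congr_ae (((hcond t)).mono fun ω h => ?_)
          simp only [h]
  -- second moment recursion
  have hJrec : ∀ t, ∫ ω, π (t + 1) ω * π (t + 1) ω ∂μ
      = (1 - (R (t + 1) / Nt (t + 1)) ^ 2) * ∫ ω, π t ω * π t ω ∂μ
        + (R (t + 1) / Nt (t + 1)) ^ 2 * p := by
    intro t
    set A := Nt t / Nt (t + 1) with hA
    set B := R (t + 1) / Nt (t + 1) with hB
    have h1 : A + B = 1 := by
      rw [hA, hB, ← add_div, ← hNt t]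
      exact div_self (hNtpos (t + 1)).ne'
    have expand : ∀ ω, π (t + 1) ω * π (t + 1) ω
        = A ^ 2 * (π t ω * π t ω)
          + (2 * A * B) * (π t ω * (S (t + 1)).indicator (fun _ => (1:ℝ)) ω)
          + B ^ 2 * ((S (t + 1)).indicator (fun _ => (1:ℝ)) ω) := by
      intro ω
      rw [hrec t]
      have := hindval t ω
      linear_combination B ^ 2 * this
    calc ∫ ω, π (t + 1) ω * π (t + 1) ω ∂μ
        = ∫ ω, A ^ 2 * (π t ω * π t ω)
            + (2 * A * B) * (π t ω * (S (t + 1)).indicator (fun _ => (1:ℝ)) ω)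
            + B ^ 2 * ((S (t + 1)).indicator (fun _ => (1:ℝ)) ω) ∂μ := by
          exact integral_congr_ae (Eventually.of_forall expand)
      _ = A ^ 2 * ∫ ω, π t ω * π t ω ∂μ
            + (2 * A * B) * ∫ ω, π t ω * (S (t + 1)).indicator (fun _ => (1:ℝ)) ω ∂μ
            + B ^ 2 * ∫ ω, (S (t + 1)).indicator (fun _ => (1:ℝ)) ω ∂μ := by
          have i1 : Integrable (fun ω => A ^ 2 * (π t ω * π t ω)) μ :=
            (hsqint t).const_mul _
          have i2 : Integrable (fun ω => (2 * A * B)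
              * (π t ω * (S (t + 1)).indicator (fun _ => (1:ℝ)) ω)) μ :=
            (hmulint t).const_mul _
          have i3 : Integrable (fun ω => B ^ 2
              * ((S (t + 1)).indicator (fun _ => (1:ℝ)) ω)) μ :=
            (hIint t).const_mul _
          have i12 : Integrable (fun ω => A ^ 2 * (π t ω * π t ω) + (2 * A * B)
              * (π t ω * (S (t + 1)).indicator (fun _ => (1:ℝ)) ω)) μ := i1.add i2
          rw [integral_add i12 i3, integral_add i1 i2,
            integral_const_mul, integral_const_mul, integral_const_mul]
      _ = (1 - B ^ 2) * ∫ ω, π t ω * π t ω ∂μ + B ^ 2 * p := by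
          rw [hmul t, hSint t, hI t]
          linear_combination (((A + B + 1) * ∫ ω, π t ω * π t ω ∂μ)) * h1
  -- second moment formula
  have hJ : ∀ t, 1 ≤ t → ∫ ω, π t ω * π t ω ∂μ = p ^ 2 + a t * (p * (1 - p)) := by
    intro t ht
    induction t with
    | zero => omega
    | succ t ih =>
      rcases Nat.lt_or_ge t 1 with h | h
      · have h0 : t = 0 := by omega
        subst h0
        rw [hJrec 0, ha1]
        have : ∫ ω, π 0 ω * π 0 ω ∂μ = p * p := by rw [hπ0]; simp
        rw [this]
        ring
      · rw [hJrec t, ih h, harec t h]; ring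
  -- limit of the second moments
  have hJlim : Tendsto (fun t => ∫ ω, π t ω * π t ω ∂μ) atTop (nhds p) := by
    have h1 : Tendsto (fun t => p ^ 2 + a t * (p * (1 - p))) atTop
        (nhds (p ^ 2 + 1 * (p * (1 - p)))) :=
      tendsto_const_nhds.add (halim.mul_const _)
    have h2 : (fun t => ∫ ω, π t ω * π t ω ∂μ) =ᶠ[atTop]
        fun t => p ^ 2 + a t * (p * (1 - p)) := by
      filter_upwards [eventually_ge_atTop 1] with t ht using hJ t ht
    rw [show p = p ^ 2 + 1 * (p * (1 - p)) by ring]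
    exact h1.congr' h2.symm
  -- dominated convergence
  have hπlimsm : AEStronglyMeasurable πlim μ :=
    aestronglyMeasurable_of_tendsto_ae atTop (fun t => (hπsm t).aestronglyMeasurable) hlim
  have hπlim01 : ∀ᵐ ω ∂μ, 0 ≤ πlim ω ∧ πlim ω ≤ 1 := by
    filter_upwards [hlim] with ω h
    exact ⟨ge_of_tendsto' h fun t => (hmem t ω).1, le_of_tendsto' h fun t => (hmem t ω).2⟩
  have hπlimint : Integrable πlim μ := by
    refine Integrable.mono' (integrable_const 1) hπlimsm ?_
    filter_upwards [hπlim01] with ω h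
    simp only [Real.norm_eq_abs, abs_le]; exact ⟨by linarith [h.1], h.2⟩
  have hπlim2int : Integrable (fun ω => πlim ω * πlim ω) μ := by
    refine Integrable.mono' (integrable_const 1) (hπlimsm.mul hπlimsm) ?_
    filter_upwards [hπlim01] with ω h
    simp only [Real.norm_eq_abs, abs_le]
    constructor <;> nlinarith [h.1, h.2]
  have hIp : ∫ ω, πlim ω ∂μ = p := by
    have hconv : Tendsto (fun t => ∫ ω, π t ω ∂μ) atTop (nhds (∫ ω, πlim ω ∂μ)) := by
      refine tendsto_integral_of_dominated_convergence (fun _ => (1 : ℝ))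
        (fun t => (hπsm t).aestronglyMeasurable) (integrable_const 1)
        (fun t => Eventually.of_forall fun ω => ?_) hlim
      have h := hmem t ω
      simp only [Real.norm_eq_abs, abs_le]; exact ⟨by linarith [h.1], h.2⟩
    have hconst : Tendsto (fun t => ∫ ω, π t ω ∂μ) atTop (nhds p) := by
      simp only [hI]; exact tendsto_const_nhds
    exact tendsto_nhds_unique hconv hconst
  have hJp : ∫ ω, πlim ω * πlim ω ∂μ = p := by
    have hconv : Tendsto (fun t => ∫ ω, π t ω * π t ω ∂μ) atTop
        (nhds (∫ ω, πlim ω * πlim ω ∂μ)) := by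
      refine tendsto_integral_of_dominated_convergence (fun _ => (1 : ℝ))
        (fun t => ((hπsm t).mul (hπsm t)).aestronglyMeasurable) (integrable_const 1)
        (fun t => Eventually.of_forall fun ω => ?_)
        (hlim.mono fun ω h => h.mul h)
      have h := hmem t ω
      simp only [Real.norm_eq_abs, abs_le]
      constructor <;> nlinarith [h.1, h.2]
    exact tendsto_nhds_unique hconv hJlim
  -- zero variance at the limit
  have hvar : ∫ ω, πlim ω * (1 - πlim ω) ∂μ = 0 := by
    have heq : ∫ ω, πlim ω * (1 - πlim ω) ∂μ
        = (∫ ω, πlim ω ∂μ) - ∫ ω, πlim ω * πlim ω ∂μ := by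
      rw [← integral_sub hπlimint hπlim2int]
      refine integral_congr_ae (Eventually.of_forall fun ω => ?_)
      ring
    rw [heq, hIp, hJp, sub_self]
  have hvarint : Integrable (fun ω => πlim ω * (1 - πlim ω)) μ := by
    have : (fun ω => πlim ω * (1 - πlim ω)) = fun ω => πlim ω - πlim ω * πlim ω := by
      funext ω; ring
    rw [this]
    exact hπlimint.sub hπlim2int
  have hzero : ∀ᵐ ω ∂μ, πlim ω * (1 - πlim ω) = 0 := by
    have hnn : 0 ≤ᵐ[μ] fun ω => πlim ω * (1 - πlim ω) := by
      filter_upwards [hπlim01] with ω h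
      exact mul_nonneg h.1 (by linarith [h.2])
    have := (integral_eq_zero_iff_of_nonneg_ae hnn hvarint).mp hvar
    filter_upwards [this] with ω h
    exact h
  have hO1 : ∀ᵐ ω ∂μ, πlim ω = 0 ∨ πlim ω = 1 := by
    filter_upwards [hzero] with ω h
    rcases mul_eq_zero.mp h with h | h
    · exact Or.inl h
    · exact Or.inr (by linarith)
  -- nonempty Ω and bounds on p
  have hΩ : Nonempty Ω := by
    by_contra h
    have h0 : μ Set.univ = 0 := by
      rw [Set.univ_eq_empty_iff.mpr (not_nonempty_iff.mp h)]
      exact measure_empty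
    rw [measure_univ] at h0
    exact one_ne_zero h0
  obtain ⟨ω₀⟩ := hΩ
  have hp01 : 0 ≤ p ∧ p ≤ 1 := by
    have h := hmem 0 ω₀
    rw [hπ0] at h
    exact ⟨h.1, h.2⟩
  -- measurable representative
  set g := hπlimsm.mk πlim with hgdef
  have hgm : StronglyMeasurable g := hπlimsm.stronglyMeasurable_mk
  have hgae : πlim =ᵐ[μ] g := hπlimsm.ae_eq_mk
  have hgA : MeasurableSet {ω | g ω = 1} := by
    have : {ω | g ω = 1} = g ⁻¹' {1} := rfl
    rw [this]
    exact hgm.measurable (measurableSet_singleton 1)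
  have hgB : MeasurableSet {ω | g ω = 0} := by
    have : {ω | g ω = 0} = g ⁻¹' {0} := rfl
    rw [this]
    exact hgm.measurable (measurableSet_singleton 0)
  have hAcongr : μ {ω | πlim ω = 1} = μ {ω | g ω = 1} := by
    apply measure_congr
    rw [Filter.eventuallyEq_set]
    filter_upwards [hgae] with ω h
    simp only [Set.mem_setOf_eq, h]
  have hBcongr : μ {ω | πlim ω = 0} = μ {ω | g ω = 0} := by
    apply measure_congr
    rw [Filter.eventuallyEq_set]
    filter_upwards [hgae] with ω h
    simp only [Set.mem_setOf_eq, h]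
  have hgO1 : ∀ᵐ ω ∂μ, g ω = 0 ∨ g ω = 1 := by
    filter_upwards [hO1, hgae] with ω hor he
    rcases hor with h | h
    · exact Or.inl (he ▸ h)
    · exact Or.inr (he ▸ h)
  have hgind : g =ᵐ[μ] ({ω | g ω = 1}).indicator (fun _ => (1 : ℝ)) := by
    filter_upwards [hgO1] with ω hor
    rcases hor with h0 | h1
    · have hne : ω ∉ {ω | g ω = 1} := by
        simp only [Set.mem_setOf_eq, h0]; norm_num
      rw [Set.indicator_of_notMem hne, h0]
    · rw [Set.indicator_of_mem (by exact h1) , h1]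
  have hgint : ∫ ω, g ω ∂μ = p := by
    rw [← integral_congr_ae hgae]
    exact hIp
  have htoReal : (μ {ω | g ω = 1}).toReal = p := by
    rw [← hgint, integral_congr_ae hgind, integral_indicator_const (1:ℝ) hgA]
    simp [Measure.real]
  have hμ1 : μ {ω | g ω = 1} = ENNReal.ofReal p := by
    rw [← htoReal, ENNReal.ofReal_toReal (measure_ne_top μ _)]
  -- measure of the zero set
  have hdisj : Disjoint {ω | g ω = 0} {ω | g ω = 1} := by
    rw [Set.disjoint_left]
    intro ω h0 h1
    simp only [Set.mem_setOf_eq] at h0 h1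
    rw [h0] at h1
    norm_num at h1
  have hunion : μ ({ω | g ω = 0} ∪ {ω | g ω = 1}) = 1 := by
    have hae : ({ω | g ω = 0} ∪ {ω | g ω = 1} : Set Ω) =ᵐ[μ] (Set.univ : Set Ω) := by
      rw [Filter.eventuallyEq_set]
      filter_upwards [hgO1] with ω hor
      simp only [Set.mem_union, Set.mem_setOf_eq, Set.mem_univ, iff_true]
      exact hor
    rw [measure_congr hae, measure_univ]
  have hadd : μ {ω | g ω = 0} + μ {ω | g ω = 1} = 1 := by
    rw [← measure_union hdisj hgA]
    exact hunion
  have hμ0 : μ {ω | g ω = 0} = ENNReal.ofReal (1 - p) := by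
    rw [hμ1] at hadd
    have h1 : ENNReal.ofReal (1 - p) + ENNReal.ofReal p = 1 := by
      rw [← ENNReal.ofReal_add (by linarith [hp01.2]) hp01.1]
      norm_num
    have h2 : μ {ω | g ω = 0} = 1 - ENNReal.ofReal p :=
      ENNReal.eq_sub_of_add_eq ENNReal.ofReal_ne_top hadd
    have h3 : ENNReal.ofReal (1 - p) = 1 - ENNReal.ofReal p :=
      ENNReal.eq_sub_of_add_eq ENNReal.ofReal_ne_top h1
    rw [h2, h3]
  exact ⟨halim, hO1, hAcongr.trans hμ1, hBcongr.trans hμ0⟩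
end

section
/- For the Pólya urn with sub-geometric reward R_t = ρ·N_{t-1}^γ, 0 < γ < 1, and a large investor with n_{k,0} = f(N) satisfying f(N)/N^γ → ∞: for each ε > 0 and each t ≥ 1 or t = ∞, P(|π_{k,t}/π_{k,0} − 1| > ε) ≤ ρ·N^γ/((1−γ)·n_{k,0}·ε²), which converges to 0 as N → ∞. -/
open MeasureTheory Filter Set ProbabilityTheory

private lemma bern_aux {q r : ℝ} (hq0 : 0 < q) (hq1 : q < 1) (hr0 : 0 < r) (hr1 : r ≤ 1) :
    1 + q * (1 - r) ≤ r ^ (-q) := by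
  have h1 : (1 + (r - 1)) ^ q ≤ 1 + q * (r - 1) :=
    rpow_one_add_le_one_add_mul_self (by linarith) hq0.le hq1.le
  have hrr : (1 : ℝ) + (r - 1) = r := by ring
  rw [hrr] at h1
  have hrq : 0 < r ^ q := Real.rpow_pos_of_pos hr0 _
  have hpos : 0 < 1 + q * (1 - r) := by nlinarith
  have h3 : (1 + q * (1 - r)) * r ^ q ≤ 1 := by
    nlinarith [mul_le_mul_of_nonneg_left h1 hpos.le, sq_nonneg (q * (1 - r))]
  have h4 : 1 + q * (1 - r) ≤ 1 / r ^ q := (le_div_iff₀ hrq).mpr h3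
  rwa [Real.rpow_neg hr0.le, ← one_div]

private lemma step_aux {ρ γ n : ℝ} (hρ : 0 < ρ) (hγ0 : 0 < γ) (hγ : γ < 1) (hn : 0 < n) :
    (ρ * n ^ γ / (n + ρ * n ^ γ)) ^ 2
      ≤ ρ / (1 - γ) * (n ^ (γ - 1) - (n + ρ * n ^ γ) ^ (γ - 1)) := by
  have hR : 0 < ρ * n ^ γ := mul_pos hρ (Real.rpow_pos_of_pos hn _)
  set R := ρ * n ^ γ with hRdef
  have hn' : 0 < n + R := by linarith
  set n' := n + R with hn'def
  have hnn' : n ≤ n' := by linarith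
  have hq0 : (0:ℝ) < 1 - γ := by linarith
  have hr0 : 0 < n / n' := div_pos hn hn'
  have hr1 : n / n' ≤ 1 := (div_le_one hn').mpr hnn'
  -- Bernoulli step
  have hbern : 1 + (1 - γ) * (1 - n / n') ≤ (n / n') ^ (γ - 1) := by
    have := bern_aux hq0 (by linarith) hr0 hr1
    have hexp : -(1 - γ) = γ - 1 := by ring
    rwa [hexp] at this
  have hpowpos : (0:ℝ) < n' ^ (γ - 1) := Real.rpow_pos_of_pos hn' _
  have hmul : n ^ (γ - 1) = (n / n') ^ (γ - 1) * n' ^ (γ - 1) := by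
    rw [← Real.mul_rpow hr0.le hn'.le, div_mul_cancel₀ _ hn'.ne']
  -- (1 - n/n') * n'^(γ-1) = R * n'^(γ-2)
  have hfrac : 1 - n / n' = R / n' := by
    field_simp
    rw [hn'def]; ring
  have hpow2 : n' ^ (γ - 2) = n' ^ (γ - 1) / n' := by
    rw [show γ - 2 = (γ - 1) - 1 by ring, Real.rpow_sub hn', Real.rpow_one]
  have hB : (1 - γ) * R * n' ^ (γ - 2) ≤ n ^ (γ - 1) - n' ^ (γ - 1) := by
    have h5 : (1 + (1 - γ) * (1 - n / n')) * n' ^ (γ - 1)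
        ≤ (n / n') ^ (γ - 1) * n' ^ (γ - 1) :=
      mul_le_mul_of_nonneg_right hbern hpowpos.le
    rw [← hmul] at h5
    have h6 : (1 - n / n') * n' ^ (γ - 1) = R * n' ^ (γ - 2) := by
      rw [hfrac, hpow2]
      field_simp
    nlinarith [h6]
  -- Step A : (R/n')^2 ≤ ρ * R * n'^(γ-2)
  have hA : (R / n') ^ 2 ≤ ρ * R * n' ^ (γ - 2) := by
    have hRle : R ≤ ρ * n' ^ γ := by
      rw [hRdef]
      exact mul_le_mul_of_nonneg_left (Real.rpow_le_rpow hn.le hnn' hγ0.le) hρ.le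
    have hpowγ : n' ^ (γ - 2) = n' ^ γ / n' ^ 2 := by
      rw [show γ - 2 = γ - (2:ℕ) by norm_num, Real.rpow_sub hn', Real.rpow_natCast]
    rw [hpowγ, div_pow, ← mul_div_assoc]
    gcongr
    nlinarith
  calc (R / n') ^ 2 ≤ ρ * R * n' ^ (γ - 2) := hA
    _ = (ρ / (1 - γ)) * ((1 - γ) * R * n' ^ (γ - 2)) := by field_simp
    _ ≤ ρ / (1 - γ) * (n ^ (γ - 1) - n' ^ (γ - 1)) := by
        apply mul_le_mul_of_nonneg_left hB (by positivity)

/-- For the Pólya urn with sub-geometric reward `R_t = ρ N_{t-1}^γ`, `0 < γ < 1`, and a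
large investor with `n_{k,0} = f(N)` satisfying `f(N)/N^γ → ∞`: for each `ε > 0` and
each `t ≥ 1` or `t = ∞`,
`P(|π_{k,t}/π_{k,0} − 1| > ε) ≤ ρ N^γ/((1−γ) n_{k,0} ε²)`, a bound which converges to
`0` as `N → ∞`.  The urn models are indexed by `ν`, with total initial coins
`Nval ν → ∞`, investor `k` initially owning `f ν` coins, and `πlim ν` the a.s. limit of
the share martingale. -/
theorem pos_share_concentration_large_investor_subgeometric_reward
    {Ω : ℕ → Type*} {m0 : ∀ ν, MeasurableSpace (Ω ν)}
    (μ : ∀ ν, Measure (Ω ν)) [∀ ν, IsProbabilityMeasure (μ ν)]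
    (𝓕 : ∀ ν, Filtration ℕ (m0 ν))
    (π : ∀ ν, ℕ → Ω ν → ℝ) (πlim : ∀ ν, Ω ν → ℝ) (S : ∀ ν, ℕ → Set (Ω ν))
    (ρ γ : ℝ) (Nval f : ℕ → ℝ) (R Nt : ℕ → ℕ → ℝ)
    (hρ : 0 < ρ) (hγ0 : 0 < γ) (hγ : γ < 1)
    (hNval : Tendsto Nval atTop atTop)
    (hNpos : ∀ ν, 0 < Nval ν)
    (hf : Tendsto (fun ν => f ν / Nval ν ^ γ) atTop atTop)
    (hfN : ∀ ν, 0 < f ν ∧ f ν ≤ Nval ν)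
    (hN0 : ∀ ν, Nt ν 0 = Nval ν)
    (hR : ∀ ν t, R ν (t + 1) = ρ * Nt ν t ^ γ)
    (hNt : ∀ ν t, Nt ν (t + 1) = Nt ν t + R ν (t + 1))
    (hadapted : ∀ ν, Adapted (𝓕 ν) (π ν))
    (hmem : ∀ ν t ω, π ν t ω ∈ Set.Icc (0 : ℝ) 1)
    (hSmeas : ∀ ν t, MeasurableSet[𝓕 ν (t + 1)] (S ν (t + 1)))
    (hcond : ∀ ν t,
      (μ ν)[(S ν (t + 1)).indicator (fun _ => (1 : ℝ)) | 𝓕 ν t] =ᵐ[μ ν] π ν t)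
    (hrec : ∀ ν t, π ν (t + 1) = fun ω =>
      (Nt ν t / Nt ν (t + 1)) * π ν t ω
        + (R ν (t + 1) / Nt ν (t + 1)) * (S ν (t + 1)).indicator 1 ω)
    (hπ0 : ∀ ν, π ν 0 = fun _ => f ν / Nval ν)
    (hlim : ∀ ν, ∀ᵐ ω ∂(μ ν), Tendsto (fun t => π ν t ω) atTop (nhds (πlim ν ω))) :
    ∀ ε > (0 : ℝ),
      (∀ ν, (∀ t : ℕ, 1 ≤ t →
          (μ ν {ω | ε < |π ν t ω / (f ν / Nval ν) - 1|}).toReal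
            ≤ ρ * Nval ν ^ γ / ((1 - γ) * f ν * ε ^ 2)) ∧
        (μ ν {ω | ε < |πlim ν ω / (f ν / Nval ν) - 1|}).toReal
            ≤ ρ * Nval ν ^ γ / ((1 - γ) * f ν * ε ^ 2)) ∧
      Tendsto (fun ν => ρ * Nval ν ^ γ / ((1 - γ) * f ν * ε ^ 2)) atTop (nhds 0) := by
  have h1γ : (0:ℝ) < 1 - γ := by linarith
  intro ε hε
  constructor
  · intro ν
    obtain ⟨hfpos, -⟩ := hfN ν
    have hN : 0 < Nval ν := hNpos ν
    set p : ℝ := f ν / Nval ν with hpdef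
    have hppos : 0 < p := div_pos hfpos hN
    set C : ℝ := ρ * Nval ν ^ γ / ((1 - γ) * f ν * ε ^ 2) with hCdef
    have hC0 : 0 ≤ C := by
      rw [hCdef]; positivity
    -- facts about Nt
    have hNtpos : ∀ t, 0 < Nt ν t := by
      intro t; induction t with
      | zero => rw [hN0]; exact hN
      | succ t ih =>
        rw [hNt, hR]
        have := Real.rpow_pos_of_pos ih γ
        positivity
    have hNtmono : ∀ t, Nt ν t ≤ Nt ν (t + 1) := by
      intro t
      rw [hNt, hR]
      nlinarith [Real.rpow_pos_of_pos (hNtpos t) γ]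
    have hNtge : ∀ t, Nval ν ≤ Nt ν t := by
      intro t; induction t with
      | zero => rw [hN0]
      | succ t ih => exact ih.trans (hNtmono t)
    -- measurability and integrability
    have hsm : ∀ t, AEStronglyMeasurable (π ν t) (μ ν) := fun t =>
      ((hadapted ν t).mono ((𝓕 ν).le t) le_rfl).aestronglyMeasurable
    have hbd1 : ∀ t ω, ‖π ν t ω‖ ≤ 1 := by
      intro t ω
      have h := hmem ν t ω
      rw [Real.norm_eq_abs, abs_le]
      exact ⟨by linarith [h.1], h.2⟩
    have hml : ∀ t, MemLp (π ν t) 2 (μ ν) := fun t =>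
      MemLp.mono_exponent (memLp_top_of_bound (hsm t) 1 (Eventually.of_forall (hbd1 t))) le_top
    have hint : ∀ t, Integrable (π ν t) (μ ν) := fun t => (hml t).integrable (by norm_num)
    have hintsq : ∀ t, Integrable (fun ω => π ν t ω ^ 2) (μ ν) := fun t => (hml t).integrable_sq
    have hindint : ∀ t, Integrable ((S ν (t + 1)).indicator (fun _ => (1 : ℝ))) (μ ν) :=
      fun t => (integrable_const 1).indicator (((𝓕 ν).le (t + 1)) _ (hSmeas ν t))
    have hmulint : ∀ t,
        Integrable (π ν t * (S ν (t + 1)).indicator (fun _ => (1 : ℝ))) (μ ν) := fun t =>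
      (hindint t).bdd_mul (hsm t) (c := 1) (Eventually.of_forall (hbd1 t))
    -- expectations: ∫ indicator = ∫ π t
    have hindE : ∀ t, ∫ ω, (S ν (t + 1)).indicator (fun _ => (1 : ℝ)) ω ∂(μ ν)
        = ∫ ω, π ν t ω ∂(μ ν) := by
      intro t
      rw [← integral_condExp ((𝓕 ν).le t)
        (f := (S ν (t + 1)).indicator (fun _ => (1 : ℝ))) (μ := μ ν)]
      exact integral_congr_ae (hcond ν t)
    have hab : ∀ t, Nt ν t / Nt ν (t + 1) + R ν (t + 1) / Nt ν (t + 1) = 1 := by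
      intro t
      rw [← add_div, ← hNt]
      exact div_self (hNtpos (t + 1)).ne'
    have hE : ∀ t, ∫ ω, π ν t ω ∂(μ ν) = p := by
      intro t; induction t with
      | zero =>
        rw [hπ0]
        simp [hpdef]
      | succ t ih =>
        have hfun : π ν (t + 1) = fun ω => (Nt ν t / Nt ν (t + 1)) * π ν t ω
            + (R ν (t + 1) / Nt ν (t + 1)) * (S ν (t + 1)).indicator (fun _ => (1 : ℝ)) ω :=
          hrec ν t
        rw [hfun]
        rw [integral_add ((hint t).const_mul _) ((hindint t).const_mul _),
          integral_const_mul _ _, integral_const_mul _ _, hindE t, ih]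
        linear_combination p * hab t
    -- second moment recursion
    have hM : ∀ t, ∫ ω, π ν t ω ^ 2 ∂(μ ν)
        ≤ p ^ 2 + p * (ρ / (1 - γ)) * (Nval ν ^ (γ - 1) - Nt ν t ^ (γ - 1)) := by
      intro t; induction t with
      | zero =>
        rw [hπ0, hN0]
        simp [hpdef]
      | succ t ih =>
        set a := Nt ν t / Nt ν (t + 1) with hadef
        set b := R ν (t + 1) / Nt ν (t + 1) with hbdef
        have hb0 : 0 ≤ b := by
          rw [hbdef, hR]
          exact div_nonneg (mul_nonneg hρ.le (Real.rpow_nonneg (hNtpos t).le _))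
            (hNtpos (t + 1)).le
        -- pull-out: ∫ π t * ind = ∫ π t ^ 2
        have hpull : ∫ ω, π ν t ω * (S ν (t + 1)).indicator (fun _ => (1 : ℝ)) ω ∂(μ ν)
            = ∫ ω, π ν t ω ^ 2 ∂(μ ν) := by
          have h1 := condExp_mul_of_stronglyMeasurable_left (hadapted ν t).stronglyMeasurable (hmulint t) (hindint t)
          have h2 : π ν t * (μ ν)[(S ν (t + 1)).indicator (fun _ => (1 : ℝ))|𝓕 ν t]
              =ᵐ[μ ν] fun ω => π ν t ω ^ 2 := by
            filter_upwards [hcond ν t] with ω hω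
            simp only [Pi.mul_apply, hω]
            ring
          calc ∫ ω, π ν t ω * (S ν (t + 1)).indicator (fun _ => (1 : ℝ)) ω ∂(μ ν)
              = ∫ ω, (π ν t * (S ν (t + 1)).indicator (fun _ => (1 : ℝ))) ω ∂(μ ν) := rfl
            _ = ∫ ω, ((μ ν)[π ν t * (S ν (t + 1)).indicator (fun _ => (1 : ℝ))|𝓕 ν t]) ω ∂(μ ν) :=
                (integral_condExp ((𝓕 ν).le t)).symm
            _ = ∫ ω, π ν t ω ^ 2 ∂(μ ν) := integral_congr_ae (h1.trans h2)
        -- expand the square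
        have hsq : (fun ω => π ν (t + 1) ω ^ 2)
            = fun ω => a ^ 2 * π ν t ω ^ 2
                + (2 * a * b) * (π ν t ω * (S ν (t + 1)).indicator (fun _ => (1 : ℝ)) ω)
                + b ^ 2 * (S ν (t + 1)).indicator (fun _ => (1 : ℝ)) ω := by
          funext ω
          rw [hrec ν t]
          by_cases hω : ω ∈ S ν (t + 1) <;>
            simp [Set.indicator_of_mem, Set.indicator_of_notMem, hω] <;> ring
        have hI1a : Integrable (fun ω => a ^ 2 * π ν t ω ^ 2) (μ ν) :=
          (hintsq t).const_mul _
        have hI1b : Integrable (fun ω => (2 * a * b)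
            * (π ν t ω * (S ν (t + 1)).indicator (fun _ => (1 : ℝ)) ω)) (μ ν) :=
          (hmulint t).const_mul _
        have hI2 : Integrable (fun ω => b ^ 2
            * (S ν (t + 1)).indicator (fun _ => (1 : ℝ)) ω) (μ ν) :=
          (hindint t).const_mul _
        have hI1 : Integrable (fun ω => a ^ 2 * π ν t ω ^ 2 + (2 * a * b)
            * (π ν t ω * (S ν (t + 1)).indicator (fun _ => (1 : ℝ)) ω)) (μ ν) :=
          hI1a.add hI1b
        have hexp : ∫ ω, π ν (t + 1) ω ^ 2 ∂(μ ν)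
            = (a ^ 2 + 2 * a * b) * (∫ ω, π ν t ω ^ 2 ∂(μ ν)) + b ^ 2 * p := by
          rw [hsq]
          rw [integral_add hI1 hI2, integral_add hI1a hI1b,
            integral_const_mul _ _, integral_const_mul _ _, integral_const_mul _ _, hpull,
            hindE t, hE t]
          ring
        have hMnonneg : 0 ≤ ∫ ω, π ν t ω ^ 2 ∂(μ ν) :=
          integral_nonneg fun ω => sq_nonneg _
        have habt := hab t
        have ha2 : a ^ 2 + 2 * a * b = 1 - b ^ 2 := by
          have : a = 1 - b := by linarith
          rw [this]; ring
        -- key analytic bound on b ^ 2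
        have hb2 : b ^ 2 ≤ ρ / (1 - γ) * (Nt ν t ^ (γ - 1) - Nt ν (t + 1) ^ (γ - 1)) := by
          have := step_aux hρ hγ0 hγ (hNtpos t)
          rw [hbdef, hNt, hR]
          exact this
        have hstep : ∫ ω, π ν (t + 1) ω ^ 2 ∂(μ ν)
            ≤ (∫ ω, π ν t ω ^ 2 ∂(μ ν)) + b ^ 2 * p := by
          rw [hexp, ha2]
          nlinarith [mul_nonneg (sq_nonneg b) hMnonneg]
        have hfinal : b ^ 2 * p
            ≤ p * (ρ / (1 - γ)) * (Nt ν t ^ (γ - 1) - Nt ν (t + 1) ^ (γ - 1)) := by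
          nlinarith [mul_le_mul_of_nonneg_right hb2 hppos.le]
        calc ∫ ω, π ν (t + 1) ω ^ 2 ∂(μ ν)
            ≤ (∫ ω, π ν t ω ^ 2 ∂(μ ν)) + b ^ 2 * p := hstep
          _ ≤ (p ^ 2 + p * (ρ / (1 - γ)) * (Nval ν ^ (γ - 1) - Nt ν t ^ (γ - 1)))
              + p * (ρ / (1 - γ)) * (Nt ν t ^ (γ - 1) - Nt ν (t + 1) ^ (γ - 1)) :=
            add_le_add ih hfinal
          _ = p ^ 2 + p * (ρ / (1 - γ)) * (Nval ν ^ (γ - 1) - Nt ν (t + 1) ^ (γ - 1)) := by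
            ring
    -- variance bound
    have hvar : ∀ t, variance (π ν t) (μ ν) ≤ p * (ρ / (1 - γ)) * Nval ν ^ (γ - 1) := by
      intro t
      rw [variance_eq_sub (hml t)]
      have h1 : (μ ν)[(π ν t) ^ 2] = ∫ ω, π ν t ω ^ 2 ∂(μ ν) := rfl
      have h2 : (μ ν)[π ν t] = p := hE t
      rw [h1, h2]
      have h3 := hM t
      have h4 : 0 ≤ Nt ν t ^ (γ - 1) := Real.rpow_nonneg (hNtpos t).le _
      nlinarith [mul_nonneg (mul_nonneg hppos.le (div_nonneg hρ.le h1γ.le)) h4]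
    -- Chebyshev for each t
    have key : ∀ t, μ ν {ω | ε < |π ν t ω / p - 1|} ≤ ENNReal.ofReal C := by
      intro t
      have hsub : {ω | ε < |π ν t ω / p - 1|}
          ⊆ {ω | ε * p ≤ |π ν t ω - (μ ν)[π ν t]|} := by
        intro ω hω
        simp only [Set.mem_setOf_eq] at hω ⊢
        rw [hE t]
        have habs : |π ν t ω / p - 1| = |π ν t ω - p| / p := by
          rw [div_sub_one hppos.ne', abs_div, abs_of_pos hppos]
        rw [habs, lt_div_iff₀ hppos] at hω
        linarith
      refine le_trans (measure_mono hsub) ?_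
      refine le_trans (meas_ge_le_variance_div_sq (hml t) (mul_pos hε hppos)) ?_
      apply ENNReal.ofReal_le_ofReal
      have harith : p * (ρ / (1 - γ)) * Nval ν ^ (γ - 1) / (ε * p) ^ 2 = C := by
        have hrw : Nval ν ^ (γ - 1) = Nval ν ^ γ / Nval ν := by
          rw [Real.rpow_sub hN, Real.rpow_one]
        rw [hrw, hCdef, hpdef]
        field_simp
      rw [← harith]
      apply div_le_div_of_nonneg_right (hvar t) (by positivity)
    have keyR : ∀ t, (μ ν {ω | ε < |π ν t ω / p - 1|}).toReal ≤ C := by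
      intro t
      refine le_trans (ENNReal.toReal_mono ENNReal.ofReal_ne_top (key t)) ?_
      rw [ENNReal.toReal_ofReal hC0]
    refine ⟨fun t _ => keyR t, ?_⟩
    -- the limit case
    set A : ℕ → Set (Ω ν) := fun t => {ω | ε < |π ν t ω / p - 1|} with hAdef
    set B : ℕ → Set (Ω ν) := fun T => ⋂ t ∈ Set.Ici T, A t with hBdef
    have hBmono : Monotone B := by
      intro T T' hTT'
      exact Set.biInter_subset_biInter_left (Set.Ici_subset_Ici.mpr hTT')
    have hae : ∀ᵐ ω ∂(μ ν),
        ω ∈ {ω | ε < |πlim ν ω / p - 1|} → ω ∈ ⋃ T, B T := by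
      filter_upwards [hlim ν] with ω hω hmemA
      have htd : Tendsto (fun t => |π ν t ω / p - 1|) atTop (nhds (|πlim ν ω / p - 1|)) :=
        ((hω.div_const p).sub_const 1).abs
      have hev : ∀ᶠ t in atTop, ε < |π ν t ω / p - 1| :=
        htd.eventually (eventually_gt_nhds hmemA)
      obtain ⟨T, hT⟩ := eventually_atTop.mp hev
      refine Set.mem_iUnion.mpr ⟨T, ?_⟩
      refine Set.mem_biInter fun t ht => ?_
      exact hT t ht
    have hle1 : μ ν {ω | ε < |πlim ν ω / p - 1|} ≤ μ ν (⋃ T, B T) := measure_mono_ae hae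
    have hle2 : μ ν (⋃ T, B T) ≤ ENNReal.ofReal C := by
      rw [(hBmono.directed_le).measure_iUnion]
      refine iSup_le fun T => ?_
      refine le_trans (measure_mono ?_) (key T)
      exact Set.biInter_subset_of_mem (Set.mem_Ici.mpr le_rfl)
    refine le_trans (ENNReal.toReal_mono ENNReal.ofReal_ne_top (hle1.trans hle2)) ?_
    rw [ENNReal.toReal_ofReal hC0]
  · have heq : (fun ν => ρ * Nval ν ^ γ / ((1 - γ) * f ν * ε ^ 2))
        = fun ν => (ρ / ((1 - γ) * ε ^ 2)) / (f ν / Nval ν ^ γ) := by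
      funext ν
      have h1 : (0:ℝ) < Nval ν ^ γ := Real.rpow_pos_of_pos (hNpos ν) γ
      have h2 := (hfN ν).1
      field_simp
    rw [heq]
    exact Tendsto.div_atTop tendsto_const_nhds hf
end

section
/- In the dynamical population PoS model with dilution parameter θ > 0, each initial investor's share process (π_{k,t}, t ≥ 0) is a supermartingale: E[π_{k,t+1} | F_t] = n_{k,t}(N_t + θ + R_{t+1})/((N_t + R_{t+1})(N_t + θ)) < π_{k,t}. -/
open MeasureTheory Filter Set

/-- In the dynamical population PoS model with dilution parameter `θ > 0`, each initial
investor's share process `(π_{k,t})` is a supermartingale: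
`E[π_{k,t+1} | 𝓕_t] = n_{k,t}(N_t + θ + R_{t+1})/((N_t + R_{t+1})(N_t + θ)) < π_{k,t}`. -/
theorem dynamical_pos_share_supermartingale
    {Ω : Type*} {m0 : MeasurableSpace Ω} (μ : Measure Ω) [IsProbabilityMeasure μ]
    (𝓕 : Filtration ℕ m0)
    (n : ℕ → Ω → ℝ) (π : ℕ → Ω → ℝ) (S : ℕ → Set Ω)
    (R : ℕ → ℝ) (Nt : ℕ → ℝ) (θ N n₀ : ℝ)
    (hθ : 0 < θ) (hN : 0 < N) (hn₀ : 0 < n₀) (hn₀N : n₀ ≤ N)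
    (hR : ∀ t, 0 < R (t + 1))
    (hN0 : Nt 0 = N)
    (hNt : ∀ t, Nt (t + 1) = Nt t + R (t + 1))
    (hn0 : n 0 = fun _ => n₀)
    (hadapted : Adapted 𝓕 n)
    (hmem : ∀ t ω, n₀ ≤ n t ω ∧ n t ω ≤ Nt t)
    (hSmeas : ∀ t, MeasurableSet[𝓕 (t + 1)] (S (t + 1)))
    (hcond : ∀ t, μ[(S (t + 1)).indicator (fun _ => (1 : ℝ)) | 𝓕 t]
      =ᵐ[μ] fun ω => n t ω / (Nt t + θ))
    (hnrec : ∀ t, n (t + 1) = fun ω => n t ω + R (t + 1) * (S (t + 1)).indicator 1 ω)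
    (hπ : ∀ t, π t = fun ω => n t ω / Nt t) :
    Supermartingale π 𝓕 μ ∧
    ∀ t, μ[π (t + 1) | 𝓕 t]
        =ᵐ[μ] (fun ω => n t ω * (Nt t + θ + R (t + 1))
          / ((Nt t + R (t + 1)) * (Nt t + θ))) ∧
      ∀ ω, n t ω * (Nt t + θ + R (t + 1)) / ((Nt t + R (t + 1)) * (Nt t + θ))
          < π t ω := by
  have hNtpos : ∀ t, 0 < Nt t := by
    intro t
    induction t with
    | zero => rw [hN0]; exact hN
    | succ t ih => rw [hNt]; exact add_pos ih (hR t)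
  have hnpos : ∀ t ω, 0 < n t ω := fun t ω => lt_of_lt_of_le hn₀ (hmem t ω).1
  have hnint : ∀ t, Integrable (n t) μ := by
    intro t
    refine ⟨((hadapted t).mono (𝓕.le t) le_rfl).aestronglyMeasurable, ?_⟩
    apply HasFiniteIntegral.of_bounded (C := Nt t)
    filter_upwards with ω
    rw [Real.norm_eq_abs, abs_of_pos (hnpos t ω)]
    exact (hmem t ω).2
  have key : ∀ t, μ[π (t + 1) | 𝓕 t]
      =ᵐ[μ] (fun ω => n t ω * (Nt t + θ + R (t + 1))
        / ((Nt t + R (t + 1)) * (Nt t + θ))) := by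
    intro t
    have hind_int : Integrable ((S (t + 1)).indicator (fun _ => (1 : ℝ))) μ :=
      (integrable_const 1).indicator ((𝓕.le (t + 1)) _ (hSmeas t))
    have hπeq : π (t + 1) = ((Nt (t + 1))⁻¹ • n t) +
        ((R (t + 1) * (Nt (t + 1))⁻¹) • (S (t + 1)).indicator (fun _ => (1 : ℝ))) := by
      funext ω
      rw [hπ, hnrec]
      have h : (0 : ℝ) < Nt (t + 1) := hNtpos (t + 1)
      simp only [Pi.add_apply, Pi.smul_apply, smul_eq_mul]
      have : (S (t + 1)).indicator (1 : Ω → ℝ) ω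
          = (S (t + 1)).indicator (fun _ => (1 : ℝ)) ω := rfl
      rw [this]
      field_simp
    calc μ[π (t + 1) | 𝓕 t]
        = μ[((Nt (t + 1))⁻¹ • n t) +
            ((R (t + 1) * (Nt (t + 1))⁻¹) • (S (t + 1)).indicator (fun _ => (1 : ℝ))) | 𝓕 t] := by
          rw [hπeq]
      _ =ᵐ[μ] μ[(Nt (t + 1))⁻¹ • n t | 𝓕 t] +
            μ[(R (t + 1) * (Nt (t + 1))⁻¹) • (S (t + 1)).indicator (fun _ => (1 : ℝ)) | 𝓕 t] :=
          condExp_add ((hnint t).smul _) (hind_int.smul _) _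
      _ =ᵐ[μ] (Nt (t + 1))⁻¹ • μ[n t | 𝓕 t] +
            (R (t + 1) * (Nt (t + 1))⁻¹) • μ[(S (t + 1)).indicator (fun _ => (1 : ℝ)) | 𝓕 t] :=
          EventuallyEq.add (condExp_smul _ _ _) (condExp_smul _ _ _)
      _ =ᵐ[μ] (fun ω => n t ω * (Nt t + θ + R (t + 1))
            / ((Nt t + R (t + 1)) * (Nt t + θ))) := by
          have h1 : μ[n t | 𝓕 t] = n t :=
            condExp_of_stronglyMeasurable (𝓕.le t) (hadapted t).stronglyMeasurable (hnint t)
          rw [h1]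
          filter_upwards [hcond t] with ω hω
          simp only [Pi.add_apply, Pi.smul_apply, smul_eq_mul, hω]
          have hx : (0 : ℝ) < Nt t := hNtpos t
          have hRp : (0 : ℝ) < R (t + 1) := hR t
          rw [hNt]
          field_simp
  have hlt : ∀ t ω, n t ω * (Nt t + θ + R (t + 1)) / ((Nt t + R (t + 1)) * (Nt t + θ))
      < π t ω := by
    intro t ω
    have hx : (0 : ℝ) < Nt t := hNtpos t
    have hRp : (0 : ℝ) < R (t + 1) := hR t
    have hnp : 0 < n t ω := hnpos t ω
    rw [hπ]
    rw [div_lt_div_iff₀ (by positivity) hx]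
    nlinarith [mul_pos (mul_pos hnp hRp) hθ]
  refine ⟨?_, fun t => ⟨key t, hlt t⟩⟩
  apply supermartingale_nat
  · intro t
    rw [hπ]
    simp only [div_eq_mul_inv]
    exact ((hadapted t).mul_const _).stronglyMeasurable
  · intro t
    rw [hπ]
    exact (hnint t).div_const _
  · intro t
    filter_upwards [key t] with ω hω
    rw [hω]
    exact le_of_lt (hlt t ω)
end
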